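/- Let H be a cocommutative Hopf algebra over k. The unshuffle coproduct ∪ on the Connes–Moscovici Hochschild complex (H^{⊗•}, b) is a morphism of cochain complexes into the total tensor product complex: for all n, all p+q = n+1 and all x ∈ H^{⊗n}, ∪_{p,q}(b(x)) = (b⊗id)(∪_{p-1,q}(x)) + (−1)^p (id⊗b)(∪_{p,q-1}(x)). Consequently ∪ induces a well-defined coproduct ⊔: HHⁿ(H) → ⊕_{p+q=n} HH^p(H)⊗HH^q(H) on the Hochschild cohomology of the Connes–Moscovici complex. -/

import Mathlib

/-!
Statement 4: Let `H` be a cocommutative Hopf algebra over a field `k` of characteristic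
zero. The unshuffle coproduct `∪` on the Connes–Moscovici Hochschild complex
`(H^{⊗•}, b)` is a morphism of cochain complexes into the total tensor product complex:
for all `p + q = n + 1` and `x ∈ H^{⊗n}`,
`∪_{p,q}(b x) = (b⊗id)(∪_{p-1,q} x) + (−1)^p (id⊗b)(∪_{p,q-1} x)`
(with `∪` of a negative index being `0`; the three cases `p,q ≥ 1`, `p = 0`, `q = 0`
are stated separately to avoid negative indices).  Consequently `∪` maps cocycles to
cocycles of the total tensor product complex, so it induces a well-defined coproduct
`⊔ : HHⁿ(H) → ⊕_{p+q=n} HH^p(H) ⊗ HH^q(H)` on Hochschild cohomology.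
-/

open TensorProduct

noncomputable section

namespace HopfCyclicStmt

variable (k : Type) [Field k]

/-! ### Iterated tensor powers and basic operations -/

section TP
variable (A : Type) [Ring A] [Algebra k A]

/-- Bundled iterated tensor powers of `A` over `k` (right-nested). -/
def TPobj : ℕ → ModuleCat k
  | 0 => ModuleCat.of k k
  | n + 1 => ModuleCat.of k (A ⊗[k] (TPobj n))

/-- `TP k A n` is the `n`-fold tensor power `A ⊗ ⋯ ⊗ A` of `A` over `k`,
with `TP k A 0 = k` and `TP k A (n+1) = A ⊗ TP k A n`. -/
def TP (n : ℕ) : Type := TPobj k A n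

instance (n : ℕ) : AddCommGroup (TP k A n) := inferInstanceAs (AddCommGroup (TPobj k A n))
instance (n : ℕ) : Module k (TP k A n) := inferInstanceAs (Module k (TPobj k A n))

/-- The pure tensor `h₁ ⊗ ⋯ ⊗ hₙ` as an element of `TP k A n`. -/
def tp : ∀ n, (Fin n → A) → TP k A n
  | 0, _ => (1 : k)
  | n + 1, f => f 0 ⊗ₜ[k] tp n (fun i => f i.succ)

/-- Transport along an equality of lengths. -/
def castTP {m n : ℕ} (h : m = n) : TP k A m ≃ₗ[k] TP k A n :=
  h ▸ LinearEquiv.refl k (TP k A m)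

/-- Multiply the `i`-th and `(i+1)`-st tensor factors (`0`-indexed). -/
def mulAt : ∀ (n : ℕ), Fin (n + 1) → (TP k A (n + 2) →ₗ[k] TP k A (n + 1))
  | n, ⟨0, _⟩ =>
      (LinearMap.rTensor (TP k A n) (LinearMap.mul' k A) :
          (A ⊗[k] A) ⊗[k] TP k A n →ₗ[k] A ⊗[k] TP k A n)
        ∘ₗ (TensorProduct.assoc k A A (TP k A n)).symm.toLinearMap
  | n + 1, ⟨j + 1, h⟩ => LinearMap.lTensor A (mulAt n ⟨j, by omega⟩)
  | 0, ⟨j + 1, h⟩ => absurd h (by omega)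

/-- Apply the counit `counitA` to the `i`-th tensor factor (`0`-indexed). -/
def dropAt (counitA : A →ₗ[k] k) : ∀ (n : ℕ), Fin (n + 1) → (TP k A (n + 1) →ₗ[k] TP k A n)
  | n, ⟨0, _⟩ =>
      (TensorProduct.lid k (TP k A n)).toLinearMap ∘ₗ LinearMap.rTensor (TP k A n) counitA
  | n + 1, ⟨j + 1, h⟩ => LinearMap.lTensor A (dropAt counitA n ⟨j, by omega⟩)
  | 0, ⟨j + 1, h⟩ => absurd h (by omega)

/-- Apply the comultiplication `comulA` to the `i`-th tensor factor (`0`-indexed). -/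
def comulAt (comulA : A →ₗ[k] A ⊗[k] A) : ∀ (n : ℕ), Fin n → (TP k A n →ₗ[k] TP k A (n + 1))
  | n + 1, ⟨0, _⟩ =>
      (TensorProduct.assoc k A A (TP k A n)).toLinearMap ∘ₗ LinearMap.rTensor (TP k A n) comulA
  | n + 2, ⟨j + 1, h⟩ => LinearMap.lTensor A (comulAt comulA (n + 1) ⟨j, by omega⟩)
  | 1, ⟨j + 1, h⟩ => absurd h (by omega)
  | 0, i => absurd i.2 (by omega)

/-- Prepend a `1` in front: `x ↦ 1 ⊗ x`. -/
def cons1 (n : ℕ) : TP k A n →ₗ[k] TP k A (n + 1) := TensorProduct.mk k A (TP k A n) 1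

/-- Append a tensor factor at the end. -/
def snoc : ∀ (n : ℕ), TP k A n ⊗[k] A →ₗ[k] TP k A (n + 1)
  | 0 => (TensorProduct.comm k k A).toLinearMap
  | n + 1 =>
      LinearMap.lTensor A (snoc n) ∘ₗ (TensorProduct.assoc k A (TP k A n) A).toLinearMap

/-- Append a `1` at the end: `x ↦ x ⊗ 1`. -/
def snoc1 (n : ℕ) : TP k A n →ₗ[k] TP k A (n + 1) :=
  snoc k A n ∘ₗ (TensorProduct.mk k (TP k A n) A).flip 1

/-- Insert a `1` right after the `i`-th tensor factor. -/
def insertOneAt : ∀ (n : ℕ), Fin (n + 1) → (TP k A (n + 1) →ₗ[k] TP k A (n + 2))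
  | n, ⟨0, _⟩ => LinearMap.lTensor A (cons1 k A n)
  | n + 1, ⟨j + 1, h⟩ => LinearMap.lTensor A (insertOneAt n ⟨j, by omega⟩)
  | 0, ⟨j + 1, h⟩ => absurd h (by omega)

/-- Pull the last tensor factor to the front. -/
def lastSplit : ∀ (n : ℕ), TP k A (n + 1) →ₗ[k] A ⊗[k] TP k A n
  | 0 => LinearMap.id
  | n + 1 =>
      (TensorProduct.leftComm k A A (TP k A n)).toLinearMap
        ∘ₗ LinearMap.lTensor A (lastSplit n)

/-- Apply the counit to every factor. -/
def epsAll (counitA : A →ₗ[k] k) : ∀ (n : ℕ), TP k A n →ₗ[k] k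
  | 0 => LinearMap.id
  | n + 1 =>
      (TensorProduct.lid k k).toLinearMap
        ∘ₗ TensorProduct.map counitA (epsAll counitA n)

/-- The diagonal (left) action of `A` on `TP k A (n+1)` with respect to the
comultiplication `comulA`: `h · (h₀ ⊗ ⋯ ⊗ hₙ) = h⁽¹⁾h₀ ⊗ ⋯ ⊗ h⁽ⁿ⁺¹⁾hₙ`. -/
def diagTP (comulA : A →ₗ[k] A ⊗[k] A) : ∀ (n : ℕ), A ⊗[k] TP k A (n + 1) →ₗ[k] TP k A (n + 1)
  | 0 =>
      (LinearMap.rTensor k (LinearMap.mul' k A) : (A ⊗[k] A) ⊗[k] k →ₗ[k] A ⊗[k] k)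
        ∘ₗ (TensorProduct.assoc k A A k).symm.toLinearMap
  | n + 1 =>
      TensorProduct.map (LinearMap.mul' k A) (diagTP comulA n)
        ∘ₗ (TensorProduct.tensorTensorTensorComm k A A A (TP k A (n + 1))).toLinearMap
        ∘ₗ LinearMap.rTensor (A ⊗[k] TP k A (n + 1)) comulA

/-- The diagonal right coaction of `A` on `TP k A n`:
`h₀ ⊗ ⋯ ⊗ hₙ ↦ (h₀⁽¹⁾ ⊗ ⋯ ⊗ hₙ⁽¹⁾) ⊗ (h₀⁽²⁾ ⋯ hₙ⁽²⁾)`. -/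
def codiagTP (comulA : A →ₗ[k] A ⊗[k] A) : ∀ (n : ℕ), TP k A n →ₗ[k] TP k A n ⊗[k] A
  | 0 => (TensorProduct.mk k (TP k A 0) A).flip 1
  | n + 1 =>
      (LinearMap.lTensor (A ⊗[k] TP k A n) (LinearMap.mul' k A)
        ∘ₗ (TensorProduct.tensorTensorTensorComm k A A (TP k A n) A).toLinearMap
        ∘ₗ TensorProduct.map comulA (codiagTP comulA n) :
          TP k A (n + 1) →ₗ[k] (A ⊗[k] TP k A n) ⊗[k] A)

end TP

/-! ### Rearrangement of tensor powers of tensor products, and the diagonal -/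

section Diag
variable (A B : Type) [Ring A] [Algebra k A] [Ring B] [Algebra k B]

/-- The rearrangement `(a₀⊗b₀) ⊗ ⋯ ⊗ (aₙ⊗bₙ) ↦ (a₀⊗⋯⊗aₙ) ⊗ (b₀⊗⋯⊗bₙ)`. -/
def OmegaTP : ∀ (n : ℕ), TP k (A ⊗[k] B) n ≃ₗ[k] TP k A n ⊗[k] TP k B n
  | 0 => (TensorProduct.lid k k).symm
  | n + 1 =>
      (TensorProduct.congr (LinearEquiv.refl k (A ⊗[k] B)) (OmegaTP n)) ≪≫ₗ
        TensorProduct.tensorTensorTensorComm k A B (TP k A n) (TP k B n)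

/-- Apply the comultiplication to every tensor factor:
`h₁ ⊗ ⋯ ⊗ hₙ ↦ (h₁⁽¹⁾⊗h₁⁽²⁾) ⊗ ⋯ ⊗ (hₙ⁽¹⁾⊗hₙ⁽²⁾)` in `TP k (A ⊗ A) n`. -/
def TPdiag (comulA : A →ₗ[k] A ⊗[k] A) : ∀ (n : ℕ), TP k A n →ₗ[k] TP k (A ⊗[k] A) n
  | 0 => LinearMap.id
  | n + 1 => TensorProduct.map comulA (TPdiag comulA n)

end Diag

/-! ### Shuffles -/

section Shuffle
variable (A : Type) [Ring A] [Algebra k A]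

/-- The subset of `Fin n` obtained from a subset of `Fin (n+1)` by removing `0`
and shifting down. -/
def tailSet {n : ℕ} (S : Finset (Fin (n + 1))) : Finset (Fin n) :=
  Finset.univ.filter (fun i : Fin n => i.succ ∈ S)

lemma tailSet_card_mem {n : ℕ} (S : Finset (Fin (n + 1))) (h : (0 : Fin (n + 1)) ∈ S) :
    (tailSet S).card + 1 = S.card := by
  classical
  have h1 : S.card = ∑ x : Fin (n + 1), if x ∈ S then 1 else 0 := by
    rw [← Finset.card_filter]
    congr 1
    simp [Finset.filter_mem_eq_inter]
  rw [h1, Fin.sum_univ_succ, if_pos h]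
  have h2 : (tailSet S).card = ∑ i : Fin n, if i.succ ∈ S then 1 else 0 := by
    rw [tailSet, Finset.card_filter]
  omega

lemma tailSet_card_not_mem {n : ℕ} (S : Finset (Fin (n + 1))) (h : (0 : Fin (n + 1)) ∉ S) :
    (tailSet S).card = S.card := by
  classical
  have h1 : S.card = ∑ x : Fin (n + 1), if x ∈ S then 1 else 0 := by
    rw [← Finset.card_filter]
    congr 1
    simp [Finset.filter_mem_eq_inter]
  rw [h1, Fin.sum_univ_succ, if_neg h]
  have h2 : (tailSet S).card = ∑ i : Fin n, if i.succ ∈ S then 1 else 0 := by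
    rw [tailSet, Finset.card_filter]
  omega

lemma tailSet_compl {n : ℕ} (S : Finset (Fin (n + 1))) :
    (tailSet S)ᶜ = tailSet Sᶜ := by
  classical
  ext i
  simp [tailSet]

lemma card_compl_eq {n p q : ℕ} (hpq : p + q = n) (S : Finset (Fin n)) (hS : S.card = p) :
    Sᶜ.card = q := by
  have h1 := Finset.card_compl S
  have h2 := Finset.card_le_univ S
  simp only [Fintype.card_fin] at h1
  simp only [Finset.card_univ, Fintype.card_fin] at h2
  omega

/-- Split a tensor power according to a subset `S` of the positions: the factors in
positions belonging to `S` are collected (in order) into the first output, those in the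
complementary positions into the second output. -/
def splitTP : ∀ (n : ℕ) (S : Finset (Fin n)), TP k A n →ₗ[k] TP k A S.card ⊗[k] TP k A Sᶜ.card
  | 0, S =>
      (TensorProduct.congr
          (castTP k A (show 0 = S.card by
            rw [Finset.eq_empty_of_isEmpty S, Finset.card_empty]))
          (castTP k A (show 0 = Sᶜ.card by
            rw [Finset.eq_empty_of_isEmpty Sᶜ, Finset.card_empty]))).toLinearMap
        ∘ₗ (TensorProduct.lid k (TP k A 0)).symm.toLinearMap
  | n + 1, S =>
      if h0 : (0 : Fin (n + 1)) ∈ S then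
        (TensorProduct.congr
            (castTP k A (by simpa using tailSet_card_mem S h0) :
                TP k A ((tailSet S).card + 1) ≃ₗ[k] TP k A S.card)
            (castTP k A (by
              rw [tailSet_compl]
              exact tailSet_card_not_mem Sᶜ (by simpa using h0)))).toLinearMap
          ∘ₗ (TensorProduct.assoc k A (TP k A (tailSet S).card)
                (TP k A (tailSet S)ᶜ.card)).symm.toLinearMap
          ∘ₗ LinearMap.lTensor A (splitTP n (tailSet S))
      else
        (TensorProduct.congr
            (castTP k A (tailSet_card_not_mem S h0))
            (castTP k A (by
              rw [tailSet_compl]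
              simpa using tailSet_card_mem Sᶜ (by simpa using h0)) :
                TP k A ((tailSet S)ᶜ.card + 1) ≃ₗ[k] TP k A Sᶜ.card)).toLinearMap
          ∘ₗ ((TensorProduct.leftComm k A (TP k A (tailSet S).card)
                (TP k A (tailSet S)ᶜ.card)).toLinearMap :
                A ⊗[k] (TP k A (tailSet S).card ⊗[k] TP k A (tailSet S)ᶜ.card) →ₗ[k]
                  TP k A (tailSet S).card ⊗[k] (A ⊗[k] TP k A (tailSet S)ᶜ.card))
          ∘ₗ LinearMap.lTensor A (splitTP n (tailSet S))

/-- The sign of the `(p,q)`-shuffle associated to a subset `S ⊆ {0,…,n−1}` of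
cardinality `p` (the shuffle placing the positions in `S` first, in order): the parity
of the number of pairs `(a, b) ∈ S × Sᶜ` with `b < a`. -/
def shuffleSign {n : ℕ} (S : Finset (Fin n)) : ℤ :=
  (-1) ^ (∑ a ∈ S, (Sᶜ.filter (· < a)).card)

/-- Keep the tensor factors in positions belonging to `S` (in order) and apply the
counit to all the other factors. -/
def keepTP (counitA : A →ₗ[k] k) (n : ℕ) (S : Finset (Fin n)) :
    TP k A n →ₗ[k] TP k A S.card :=
  (TensorProduct.rid k (TP k A S.card)).toLinearMap
    ∘ₗ LinearMap.lTensor (TP k A S.card) (epsAll k A counitA Sᶜ.card)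
    ∘ₗ splitTP k A n S

/-- The component `∪_{p,q} : A^{⊗n} → A^{⊗p} ⊗ A^{⊗q}` of the unshuffle coproduct:
`∪_{p,q}(h₁⊗⋯⊗hₙ) = Σ_σ sign(σ) (h_{σ(1)}⊗⋯⊗h_{σ(p)}) ⊗ (h_{σ(p+1)}⊗⋯⊗h_{σ(n)})`,
where `σ` runs over all `(p,q)`-shuffles. -/
def cupTP (n p q : ℕ) (hpq : p + q = n) : TP k A n →ₗ[k] TP k A p ⊗[k] TP k A q :=
  ∑ S : {S : Finset (Fin n) // S.card = p},
    shuffleSign S.1 •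
      ((TensorProduct.congr (castTP k A S.2)
          (castTP k A (card_compl_eq hpq S.1 S.2))).toLinearMap
        ∘ₗ splitTP k A n S.1)

/-- The shuffle map `sh_{p,q} : A^{⊗n} ⊗ A^{⊗n} → A^{⊗p} ⊗ A^{⊗q}` (for `p + q = n`):
the signed sum over all `(p,q)`-shuffles `σ` of the map applying the counit to the
factors in positions `σ(p+1),…,σ(n)` of the first copy and in positions `σ(1),…,σ(p)`
of the second copy. -/
def shTP (counitA : A →ₗ[k] k) (n p q : ℕ) (hpq : p + q = n) :
    TP k A n ⊗[k] TP k A n →ₗ[k] TP k A p ⊗[k] TP k A q :=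
  ∑ S : {S : Finset (Fin n) // S.card = p},
    shuffleSign S.1 •
      TensorProduct.map
        ((castTP k A S.2).toLinearMap ∘ₗ keepTP k A counitA n S.1)
        ((castTP k A (card_compl_eq hpq S.1 S.2)).toLinearMap ∘ₗ keepTP k A counitA n S.1ᶜ)

end Shuffle

/-! ### The Connes–Moscovici style cocyclic module `C^n(H, M) = M ⊗_H H^{⊗(n+1)}` -/

section CMcochain
variable (A M : Type) [Ring A] [Algebra k A] [AddCommGroup M] [Module k M]

/-- The coface maps of the cocyclic module `C(H,M)` at the level of
`M ⊗ H^{⊗(n+1)}`: for `i ≤ n` the comultiplication is applied to the `i`-th factor,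
and for `i = n+1` we take the flip-over coface
`m ⊗ h₀ ⊗ ⋯ ⊗ hₙ ↦ m⁽⁰⁾ ⊗ h₀⁽²⁾ ⊗ h₁ ⊗ ⋯ ⊗ hₙ ⊗ m⁽⁻¹⁾h₀⁽¹⁾`. -/
def cofaceCM (comulA : A →ₗ[k] A ⊗[k] A) (coact : M →ₗ[k] A ⊗[k] M) (n : ℕ)
    (i : Fin (n + 2)) : M ⊗[k] TP k A (n + 1) →ₗ[k] M ⊗[k] TP k A (n + 2) :=
  if h : i.val ≤ n then
    LinearMap.lTensor M (comulAt k A comulA (n + 1) ⟨i.val, by omega⟩)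
  else
    LinearMap.lTensor M
        (snoc k A (n + 1) ∘ₗ (TensorProduct.comm k A (TP k A (n + 1))).toLinearMap)
      ∘ₗ (TensorProduct.leftComm k A M (TP k A (n + 1))).toLinearMap
      ∘ₗ LinearMap.rTensor (M ⊗[k] TP k A (n + 1)) (LinearMap.mul' k A)
      ∘ₗ (TensorProduct.tensorTensorTensorComm k A M A (TP k A (n + 1))).toLinearMap
      ∘ₗ (LinearMap.rTensor (TP k A (n + 2)) coact :
          M ⊗[k] TP k A (n + 2) →ₗ[k] (A ⊗[k] M) ⊗[k] (A ⊗[k] TP k A (n + 1)))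
      ∘ₗ LinearMap.lTensor M (comulAt k A comulA (n + 1) ⟨0, by omega⟩)

/-- The codegeneracy maps of the cocyclic module `C(H,M)` at the level of
`M ⊗ H^{⊗(n+2)}`: `σᵢ` applies the counit to the `(i+1)`-st factor. -/
def codegenCM (counitA : A →ₗ[k] k) (n : ℕ) (i : Fin (n + 1)) :
    M ⊗[k] TP k A (n + 2) →ₗ[k] M ⊗[k] TP k A (n + 1) :=
  LinearMap.lTensor M (dropAt k A counitA (n + 1) ⟨i.val + 1, by omega⟩)

/-- The cocyclic operator of `C(H,M)` at the level of `M ⊗ H^{⊗(n+1)}`: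
`τₙ(m ⊗ h₀ ⊗ ⋯ ⊗ hₙ) = m⁽⁰⁾ ⊗ h₁ ⊗ ⋯ ⊗ hₙ ⊗ m⁽⁻¹⁾h₀`. -/
def tauCM (coact : M →ₗ[k] A ⊗[k] M) (n : ℕ) :
    M ⊗[k] TP k A (n + 1) →ₗ[k] M ⊗[k] TP k A (n + 1) :=
  LinearMap.lTensor M (snoc k A n ∘ₗ (TensorProduct.comm k A (TP k A n)).toLinearMap)
    ∘ₗ (TensorProduct.leftComm k A M (TP k A n)).toLinearMap
    ∘ₗ LinearMap.rTensor (M ⊗[k] TP k A n) (LinearMap.mul' k A)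
    ∘ₗ (TensorProduct.tensorTensorTensorComm k A M A (TP k A n)).toLinearMap
    ∘ₗ LinearMap.rTensor (TP k A (n + 1)) coact

/-- The relators defining `C^n(H, M) = M ⊗_H H^{⊗(n+1)}` as a quotient of
`M ⊗ H^{⊗(n+1)}`: the span of all `m·h ⊗ t − m ⊗ h·t`, where `h` acts diagonally
(through the comultiplication) on `t ∈ H^{⊗(n+1)}`. -/
def cmRel (comulA : A →ₗ[k] A ⊗[k] A) (act : M →ₗ[k] A →ₗ[k] M) (n : ℕ) :
    Submodule k (M ⊗[k] TP k A (n + 1)) :=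
  Submodule.span k {x | ∃ (m : M) (h : A) (t : TP k A (n + 1)),
    x = act m h ⊗ₜ[k] t - m ⊗ₜ[k] diagTP k A comulA n (h ⊗ₜ[k] t)}

/-- The Hopf-cyclic cochain space `C^n(H, M) = M ⊗_H H^{⊗(n+1)}`. -/
def CM (comulA : A →ₗ[k] A ⊗[k] A) (act : M →ₗ[k] A →ₗ[k] M) (n : ℕ) : Type :=
  (M ⊗[k] TP k A (n + 1)) ⧸ cmRel k A M comulA act n

instance (comulA : A →ₗ[k] A ⊗[k] A) (act : M →ₗ[k] A →ₗ[k] M) (n : ℕ) :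
    AddCommGroup (CM k A M comulA act n) :=
  inferInstanceAs (AddCommGroup ((M ⊗[k] TP k A (n + 1)) ⧸ cmRel k A M comulA act n))

instance (comulA : A →ₗ[k] A ⊗[k] A) (act : M →ₗ[k] A →ₗ[k] M) (n : ℕ) :
    Module k (CM k A M comulA act n) :=
  inferInstanceAs (Module k ((M ⊗[k] TP k A (n + 1)) ⧸ cmRel k A M comulA act n))

/-- The canonical projection `M ⊗ H^{⊗(n+1)} → C^n(H,M)`. -/
def cmMk (comulA : A →ₗ[k] A ⊗[k] A) (act : M →ₗ[k] A →ₗ[k] M) (n : ℕ) :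
    M ⊗[k] TP k A (n + 1) →ₗ[k] CM k A M comulA act n :=
  (cmRel k A M comulA act n).mkQ

end CMcochain

/-! ### The cyclic module `C̃ₙ(H,M)` (Hopf-cyclic homology) -/

section CyChain
variable (A M : Type) [Ring A] [Algebra k A] [AddCommGroup M] [Module k M]

/-- The cyclic operator `τₙ(h₀ ⊗ ⋯ ⊗ hₙ ⊗ m) = hₙ⁽¹⁾ ⊗ h₀ ⊗ ⋯ ⊗ h_{n-1} ⊗ hₙ⁽²⁾·m`
at the level of `H^{⊗(n+1)} ⊗ M`. -/
def tauCy (comulA : A →ₗ[k] A ⊗[k] A) (act : A →ₗ[k] M →ₗ[k] M) (n : ℕ) :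
    TP k A (n + 1) ⊗[k] M →ₗ[k] TP k A (n + 1) ⊗[k] M :=
  TensorProduct.map LinearMap.id (TensorProduct.lift act)
    ∘ₗ (TensorProduct.tensorTensorTensorComm k A A (TP k A n) M).toLinearMap
    ∘ₗ (TensorProduct.assoc k (A ⊗[k] A) (TP k A n) M).toLinearMap
    ∘ₗ LinearMap.rTensor M (LinearMap.rTensor (TP k A n) comulA)
    ∘ₗ LinearMap.rTensor M (lastSplit k A n)

/-- The face maps of `C̃(H,M)` at the level of `H^{⊗(n+2)} ⊗ M`: for `i ≤ n`,
`δᵢ` multiplies the `i`-th and `(i+1)`-st factors; the last face is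
`δ_{n+1}(h₀ ⊗ ⋯ ⊗ h_{n+1} ⊗ m) = h_{n+1}⁽¹⁾h₀ ⊗ h₁ ⊗ ⋯ ⊗ hₙ ⊗ h_{n+1}⁽²⁾·m`. -/
def faceCy (comulA : A →ₗ[k] A ⊗[k] A) (act : A →ₗ[k] M →ₗ[k] M) (n : ℕ)
    (i : Fin (n + 2)) : TP k A (n + 2) ⊗[k] M →ₗ[k] TP k A (n + 1) ⊗[k] M :=
  if h : i.val ≤ n then
    LinearMap.rTensor M (mulAt k A n ⟨i.val, by omega⟩)
  else
    LinearMap.rTensor M (mulAt k A n ⟨0, by omega⟩)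
      ∘ₗ tauCy k A M comulA act (n + 1)

/-- The degeneracy maps of `C̃(H,M)` at the level of `H^{⊗(n+1)} ⊗ M`: `σᵢ` inserts a
`1` after the `i`-th tensor factor. -/
def degenCy (n : ℕ) (i : Fin (n + 1)) :
    TP k A (n + 1) ⊗[k] M →ₗ[k] TP k A (n + 2) ⊗[k] M :=
  LinearMap.rTensor M (insertOneAt k A n i)

/-- The map whose kernel is the cotensor product `H^{⊗(n+1)} □_H M`
(diagonal right coaction on `H^{⊗(n+1)}`, left coaction `coact` on `M`). -/
def cotensorMapCy (comulA : A →ₗ[k] A ⊗[k] A) (coact : M →ₗ[k] A ⊗[k] M) (n : ℕ) :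
    TP k A (n + 1) ⊗[k] M →ₗ[k] TP k A (n + 1) ⊗[k] (A ⊗[k] M) :=
  (TensorProduct.assoc k (TP k A (n + 1)) A M).toLinearMap
      ∘ₗ LinearMap.rTensor M (codiagTP k A comulA (n + 1))
    - LinearMap.lTensor (TP k A (n + 1)) coact

/-- The cotensor product `C̃ₙ(H,M) = H^{⊗(n+1)} □_H M`, as a submodule of
`H^{⊗(n+1)} ⊗ M`. -/
def cotensorCy (comulA : A →ₗ[k] A ⊗[k] A) (coact : M →ₗ[k] A ⊗[k] M) (n : ℕ) :
    Submodule k (TP k A (n + 1) ⊗[k] M) :=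
  LinearMap.ker (cotensorMapCy k A M comulA coact n)

end CyChain

/-! ### (Stable) anti-Yetter–Drinfeld conditions -/

section AYD

variable (A M : Type) [Ring A] [Algebra k A] [AddCommGroup M] [Module k M]

/-- `M` is a right `A`-module via the bilinear map `act`. -/
def IsRightAction (act : M →ₗ[k] A →ₗ[k] M) : Prop :=
  (∀ m : M, act m 1 = m) ∧ ∀ (m : M) (a b : A), act (act m a) b = act m (a * b)

/-- `M` is a left `A`-module via the bilinear map `act`. -/
def IsLeftAction (act : A →ₗ[k] M →ₗ[k] M) : Prop :=
  (∀ m : M, act 1 m = m) ∧ ∀ (a b : A) (m : M), act a (act b m) = act (a * b) m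

/-- `coact` makes `M` a left `A`-comodule, with respect to the comultiplication `comulA`
and counit `counitA`. -/
def IsLeftCoaction (comulA : A →ₗ[k] A ⊗[k] A) (counitA : A →ₗ[k] k)
    (coact : M →ₗ[k] A ⊗[k] M) : Prop :=
  (LinearMap.rTensor M comulA ∘ₗ coact
      = (TensorProduct.assoc k A A M).symm.toLinearMap ∘ₗ LinearMap.lTensor A coact ∘ₗ coact)
  ∧ ∀ m : M, (TensorProduct.lid k M) (LinearMap.rTensor M counitA (coact m)) = m

/-- The iterated comultiplication `h ↦ h⁽¹⁾ ⊗ (h⁽²⁾ ⊗ h⁽³⁾)`. -/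
def comul₂ (comulA : A →ₗ[k] A ⊗[k] A) : A →ₗ[k] A ⊗[k] (A ⊗[k] A) :=
  LinearMap.lTensor A comulA ∘ₗ comulA

/-- The linear map `(a ⊗ m) ⊗ (h₁ ⊗ (h₂ ⊗ h₃)) ↦ (S(h₃) * a * h₁) ⊗ (m · h₂)`,
the right-hand side of the (right-module, left-comodule) anti-Yetter–Drinfeld
condition. -/
def aydRHS (antipodeA : A →ₗ[k] A) (act : M →ₗ[k] A →ₗ[k] M) :
    (A ⊗[k] M) ⊗[k] (A ⊗[k] (A ⊗[k] A)) →ₗ[k] A ⊗[k] M :=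
  TensorProduct.map (LinearMap.mul' k A ∘ₗ LinearMap.lTensor A (LinearMap.mul' k A))
      (TensorProduct.lift act)
    ∘ₗ (TensorProduct.assoc k A (A ⊗[k] A) (M ⊗[k] A)).symm.toLinearMap
    ∘ₗ (TensorProduct.leftComm k (A ⊗[k] A) A (M ⊗[k] A)).toLinearMap
    ∘ₗ LinearMap.lTensor (A ⊗[k] A)
        ((TensorProduct.leftComm k M A A).toLinearMap
          ∘ₗ LinearMap.lTensor M (TensorProduct.comm k A A).toLinearMap)
    ∘ₗ (TensorProduct.tensorTensorTensorComm k A M A (A ⊗[k] A)).toLinearMap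
    ∘ₗ LinearMap.lTensor (A ⊗[k] M) (LinearMap.lTensor A (LinearMap.lTensor A antipodeA))

/-- The anti-Yetter–Drinfeld compatibility condition
`φ(m·h) = S(h⁽³⁾) m⁽⁻¹⁾ h⁽¹⁾ ⊗ m⁽⁰⁾·h⁽²⁾`, written without Sweedler notation. -/
def IsAYD (comulA : A →ₗ[k] A ⊗[k] A) (antipodeA : A →ₗ[k] A)
    (act : M →ₗ[k] A →ₗ[k] M) (coact : M →ₗ[k] A ⊗[k] M) : Prop :=
  ∀ (m : M) (h : A),
    coact (act m h) = aydRHS k A M antipodeA act (coact m ⊗ₜ[k] comul₂ k A comulA h)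

/-- The stability condition `m⁽⁰⁾ · m⁽⁻¹⁾ = m` for a right module, left comodule. -/
def IsStable (act : M →ₗ[k] A →ₗ[k] M) (coact : M →ₗ[k] A ⊗[k] M) : Prop :=
  ∀ m : M, TensorProduct.lift act (TensorProduct.comm k A M (coact m)) = m

/-- The linear map `(h₁ ⊗ (h₂ ⊗ h₃)) ⊗ (a ⊗ m) ↦ (h₁ * a * S(h₃)) ⊗ (h₂ · m)`,
the right-hand side of the left-left anti-Yetter–Drinfeld condition. -/
def llAydRHS (antipodeA : A →ₗ[k] A) (act : A →ₗ[k] M →ₗ[k] M) :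
    (A ⊗[k] (A ⊗[k] A)) ⊗[k] (A ⊗[k] M) →ₗ[k] A ⊗[k] M :=
  TensorProduct.map (LinearMap.mul' k A) (TensorProduct.lift act)
    ∘ₗ (TensorProduct.tensorTensorTensorComm k A A A M).toLinearMap
    ∘ₗ LinearMap.rTensor (A ⊗[k] M)
        ((TensorProduct.comm k A A).toLinearMap
          ∘ₗ LinearMap.lTensor A (LinearMap.mul' k A)
          ∘ₗ (TensorProduct.assoc k A A A).toLinearMap
          ∘ₗ LinearMap.rTensor A (TensorProduct.comm k A A).toLinearMap)
    ∘ₗ (TensorProduct.tensorTensorTensorComm k (A ⊗[k] A) A A M).toLinearMap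
    ∘ₗ LinearMap.rTensor (A ⊗[k] M) (TensorProduct.assoc k A A A).symm.toLinearMap
    ∘ₗ LinearMap.rTensor (A ⊗[k] M) (LinearMap.lTensor A (LinearMap.lTensor A antipodeA))

/-- The left-left anti-Yetter–Drinfeld condition
`φ(h·m) = h⁽¹⁾ m⁽⁻¹⁾ S(h⁽³⁾) ⊗ h⁽²⁾·m⁽⁰⁾`. -/
def IsLLAYD (comulA : A →ₗ[k] A ⊗[k] A) (antipodeA : A →ₗ[k] A)
    (act : A →ₗ[k] M →ₗ[k] M) (coact : M →ₗ[k] A ⊗[k] M) : Prop :=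
  ∀ (h : A) (m : M),
    coact (act h m) = llAydRHS k A M antipodeA act (comul₂ k A comulA h ⊗ₜ[k] coact m)

/-- The stability condition `m⁽⁻¹⁾ · m⁽⁰⁾ = m` for a left module, left comodule. -/
def IsLLStable (act : A →ₗ[k] M →ₗ[k] M) (coact : M →ₗ[k] A ⊗[k] M) : Prop :=
  ∀ m : M, TensorProduct.lift act (coact m) = m

end AYD

/-! ### Tensor products of (co)module structures -/

section TensorStructures

variable (A B M N : Type) [Ring A] [Algebra k A] [Ring B] [Algebra k B]
variable [AddCommGroup M] [Module k M] [AddCommGroup N] [Module k N]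

/-- The componentwise right action of `A ⊗ B` on `M ⊗ N`. -/
def tensorAct (actM : M →ₗ[k] A →ₗ[k] M) (actN : N →ₗ[k] B →ₗ[k] N) :
    M ⊗[k] N →ₗ[k] (A ⊗[k] B) →ₗ[k] M ⊗[k] N :=
  TensorProduct.curry
    (TensorProduct.map (TensorProduct.lift actM) (TensorProduct.lift actN)
      ∘ₗ (TensorProduct.tensorTensorTensorComm k M N A B).toLinearMap)

/-- The componentwise left action of `A ⊗ B` on `M ⊗ N`. -/
def tensorLAct (actM : A →ₗ[k] M →ₗ[k] M) (actN : B →ₗ[k] N →ₗ[k] N) :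
    (A ⊗[k] B) →ₗ[k] M ⊗[k] N →ₗ[k] M ⊗[k] N :=
  TensorProduct.curry
    (TensorProduct.map (TensorProduct.lift actM) (TensorProduct.lift actN)
      ∘ₗ (TensorProduct.tensorTensorTensorComm k A B M N).toLinearMap)

/-- The coaction `m ⊗ n ↦ (m⁽⁻¹⁾ ⊗ n⁽⁻¹⁾) ⊗ (m⁽⁰⁾ ⊗ n⁽⁰⁾)` of `A ⊗ B` on `M ⊗ N`. -/
def tensorCoact (coactM : M →ₗ[k] A ⊗[k] M) (coactN : N →ₗ[k] B ⊗[k] N) :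
    M ⊗[k] N →ₗ[k] (A ⊗[k] B) ⊗[k] (M ⊗[k] N) :=
  (TensorProduct.tensorTensorTensorComm k A M B N).toLinearMap
    ∘ₗ TensorProduct.map coactM coactN

/-- The comultiplication `(a ⊗ b) ↦ (a⁽¹⁾ ⊗ b⁽¹⁾) ⊗ (a⁽²⁾ ⊗ b⁽²⁾)` of a tensor product. -/
def tensorComul (comulA : A →ₗ[k] A ⊗[k] A) (comulB : B →ₗ[k] B ⊗[k] B) :
    (A ⊗[k] B) →ₗ[k] (A ⊗[k] B) ⊗[k] (A ⊗[k] B) :=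
  (TensorProduct.tensorTensorTensorComm k A A B B).toLinearMap
    ∘ₗ TensorProduct.map comulA comulB

/-- The antipode `S ⊗ S` of a tensor product. -/
def tensorAntipode (antipodeA : A →ₗ[k] A) (antipodeB : B →ₗ[k] B) :
    (A ⊗[k] B) →ₗ[k] A ⊗[k] B :=
  TensorProduct.map antipodeA antipodeB

/-- The rearrangement
`(m ⊗ n) ⊗ ((a₀⊗b₀) ⊗ ⋯ ⊗ (aₙ⊗bₙ)) ↦ (m ⊗ a₀⊗⋯⊗aₙ) ⊗ (n ⊗ b₀⊗⋯⊗bₙ)`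
identifying the underlying space of `C^n(A ⊗ B, M ⊗ N)` with the tensor product of
those of `C^n(A, M)` and `C^n(B, N)`. -/
def OmegaCM (n : ℕ) :
    (M ⊗[k] N) ⊗[k] TP k (A ⊗[k] B) (n + 1) ≃ₗ[k]
      (M ⊗[k] TP k A (n + 1)) ⊗[k] (N ⊗[k] TP k B (n + 1)) :=
  TensorProduct.congr (LinearEquiv.refl k (M ⊗[k] N)) (OmegaTP k A B (n + 1)) ≪≫ₗ
    TensorProduct.tensorTensorTensorComm k M N (TP k A (n + 1)) (TP k B (n + 1))

/-- The rearrangement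
`((a₀⊗b₀) ⊗ ⋯ ⊗ (aₙ⊗bₙ)) ⊗ (m ⊗ n) ↦ (a₀⊗⋯⊗aₙ ⊗ m) ⊗ (b₀⊗⋯⊗bₙ ⊗ n)`
identifying the underlying space of `C̃ₙ(A ⊗ B, M ⊗ N)` with the tensor product of
those of `C̃ₙ(A, M)` and `C̃ₙ(B, N)`. -/
def OmegaCy (n : ℕ) :
    TP k (A ⊗[k] B) (n + 1) ⊗[k] (M ⊗[k] N) ≃ₗ[k]
      (TP k A (n + 1) ⊗[k] M) ⊗[k] (TP k B (n + 1) ⊗[k] N) :=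
  TensorProduct.congr (OmegaTP k A B (n + 1)) (LinearEquiv.refl k (M ⊗[k] N)) ≪≫ₗ
    TensorProduct.tensorTensorTensorComm k (TP k A (n + 1)) (TP k B (n + 1)) M N

end TensorStructures

/-! ### Auxiliary lemmas for the cup-product chain map -/

section CupChain
variable (A : Type) [Ring A] [Algebra k A]

/-- Prepend a fixed element `a` : `x ↦ a ⊗ x`. -/
def mkT (n : ℕ) (a : A) : TP k A n →ₗ[k] TP k A (n + 1) :=
  TensorProduct.mk k A (TP k A n) a

lemma cons1_eq_mkT (n : ℕ) : cons1 k A n = mkT k A n 1 := rfl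

lemma castTP_refl {m : ℕ} (h : m = m) : castTP k A h = LinearEquiv.refl k (TP k A m) := rfl

lemma castTP_trans {a b c : ℕ} (h₁ : a = b) (h₂ : b = c) :
    (castTP k A h₂).toLinearMap ∘ₗ (castTP k A h₁).toLinearMap
      = (castTP k A (h₁.trans h₂)).toLinearMap := by
  subst h₁; subst h₂; rfl

lemma castTP_mk {a b : ℕ} (e : a = b) (e' : a + 1 = b + 1) (h₀ : A) :
    (castTP k A e').toLinearMap ∘ₗ mkT k A a h₀
      = mkT k A b h₀ ∘ₗ (castTP k A e).toLinearMap := by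
  subst e; rfl

variable {k A} in
lemma comp_sum' {M N P : Type} [AddCommGroup M] [Module k M] [AddCommGroup N] [Module k N]
    [AddCommGroup P] [Module k P] {ι : Type} (s : Finset ι)
    (f : N →ₗ[k] P) (g : ι → M →ₗ[k] N) :
    f ∘ₗ (∑ i ∈ s, g i) = ∑ i ∈ s, f ∘ₗ g i := by
  ext x; simp

variable {k A} in
lemma sum_comp' {M N P : Type} [AddCommGroup M] [Module k M] [AddCommGroup N] [Module k N]
    [AddCommGroup P] [Module k P] {ι : Type} (s : Finset ι)
    (f : M →ₗ[k] N) (g : ι → N →ₗ[k] P) :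
    (∑ i ∈ s, g i) ∘ₗ f = ∑ i ∈ s, g i ∘ₗ f := by
  ext x; simp

variable {k A} in
lemma comp_zsmul' {M N P : Type} [AddCommGroup M] [Module k M] [AddCommGroup N] [Module k N]
    [AddCommGroup P] [Module k P] (f : N →ₗ[k] P) (c : ℤ) (g : M →ₗ[k] N) :
    f ∘ₗ (c • g) = c • (f ∘ₗ g) := by
  ext x; simp

variable {k A} in
lemma zsmul_comp' {M N P : Type} [AddCommGroup M] [Module k M] [AddCommGroup N] [Module k N]
    [AddCommGroup P] [Module k P] (f : M →ₗ[k] N) (c : ℤ) (g : N →ₗ[k] P) :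
    (c • g) ∘ₗ f = c • (g ∘ₗ f) := by
  ext x; simp

lemma assoc_symm_comp_mk {M L R : Type} [AddCommGroup M] [Module k M] [AddCommGroup L]
    [Module k L] [AddCommGroup R] [Module k R] (f : M →ₗ[k] L ⊗[k] R) (a : A) :
    (TensorProduct.assoc k A L R).symm.toLinearMap
        ∘ₗ LinearMap.lTensor A f ∘ₗ TensorProduct.mk k A M a
      = LinearMap.rTensor R (TensorProduct.mk k A L a) ∘ₗ f := by
  ext x
  simp only [LinearMap.comp_apply, TensorProduct.mk_apply, LinearMap.lTensor_tmul,
    LinearEquiv.coe_coe]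
  induction f x using TensorProduct.induction_on with
  | zero => simp
  | tmul l r => simp
  | add y z hy hz => simp [TensorProduct.tmul_add, hy, hz]

lemma leftComm_comp_mk {M L R : Type} [AddCommGroup M] [Module k M] [AddCommGroup L]
    [Module k L] [AddCommGroup R] [Module k R] (f : M →ₗ[k] L ⊗[k] R) (a : A) :
    (TensorProduct.leftComm k A L R).toLinearMap
        ∘ₗ LinearMap.lTensor A f ∘ₗ TensorProduct.mk k A M a
      = LinearMap.lTensor L (TensorProduct.mk k A R a) ∘ₗ f := by
  ext x
  simp only [LinearMap.comp_apply, TensorProduct.mk_apply, LinearMap.lTensor_tmul,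
    LinearEquiv.coe_coe]
  induction f x using TensorProduct.induction_on with
  | zero => simp
  | tmul l r => simp
  | add y z hy hz => simp [TensorProduct.tmul_add, hy, hz]

lemma splitTP_succ (n : ℕ) (S : Finset (Fin (n + 1))) :
    splitTP k A (n + 1) S =
      if h0 : (0 : Fin (n + 1)) ∈ S then
        (TensorProduct.congr
            (castTP k A (by simpa using tailSet_card_mem S h0) :
                TP k A ((tailSet S).card + 1) ≃ₗ[k] TP k A S.card)
            (castTP k A (by
              rw [tailSet_compl]
              exact tailSet_card_not_mem Sᶜ (by simpa using h0)))).toLinearMap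
          ∘ₗ (TensorProduct.assoc k A (TP k A (tailSet S).card)
                (TP k A (tailSet S)ᶜ.card)).symm.toLinearMap
          ∘ₗ LinearMap.lTensor A (splitTP k A n (tailSet S))
      else
        (TensorProduct.congr
            (castTP k A (tailSet_card_not_mem S h0))
            (castTP k A (by
              rw [tailSet_compl]
              simpa using tailSet_card_mem Sᶜ (by simpa using h0)) :
                TP k A ((tailSet S)ᶜ.card + 1) ≃ₗ[k] TP k A Sᶜ.card)).toLinearMap
          ∘ₗ ((TensorProduct.leftComm k A (TP k A (tailSet S).card)
                (TP k A (tailSet S)ᶜ.card)).toLinearMap :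
                A ⊗[k] (TP k A (tailSet S).card ⊗[k] TP k A (tailSet S)ᶜ.card) →ₗ[k]
                  TP k A (tailSet S).card ⊗[k] (A ⊗[k] TP k A (tailSet S)ᶜ.card))
          ∘ₗ LinearMap.lTensor A (splitTP k A n (tailSet S))
  := rfl

lemma splitTP_comp_mk_mem (n : ℕ) (S : Finset (Fin (n + 1))) (h0 : (0 : Fin (n + 1)) ∈ S)
    (a : A) :
    splitTP k A (n + 1) S ∘ₗ mkT k A n a
      = (TensorProduct.congr
            (castTP k A (by simpa using tailSet_card_mem S h0) :
                TP k A ((tailSet S).card + 1) ≃ₗ[k] TP k A S.card)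
            (castTP k A (by
              rw [tailSet_compl]
              exact tailSet_card_not_mem Sᶜ (by simpa using h0)))).toLinearMap
          ∘ₗ LinearMap.rTensor (TP k A (tailSet S)ᶜ.card) (mkT k A (tailSet S).card a)
          ∘ₗ splitTP k A n (tailSet S) := by
  rw [splitTP_succ, dif_pos h0]
  erw [LinearMap.comp_assoc, LinearMap.comp_assoc]

set_option maxHeartbeats 2000000 in
lemma splitTP_comp_mk_not_mem (n : ℕ) (S : Finset (Fin (n + 1)))
    (h0 : (0 : Fin (n + 1)) ∉ S) (a : A) :
    splitTP k A (n + 1) S ∘ₗ mkT k A n a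
      = (TensorProduct.congr
            (castTP k A (tailSet_card_not_mem S h0))
            (castTP k A (by
              rw [tailSet_compl]
              simpa using tailSet_card_mem Sᶜ (by simpa using h0)) :
                TP k A ((tailSet S)ᶜ.card + 1) ≃ₗ[k] TP k A Sᶜ.card)).toLinearMap
          ∘ₗ LinearMap.lTensor (TP k A (tailSet S).card) (mkT k A (tailSet S)ᶜ.card a)
          ∘ₗ splitTP k A n (tailSet S) := by
  rw [splitTP_succ, dif_neg h0]
  erw [LinearMap.comp_assoc, LinearMap.comp_assoc]
  congr 1
  erw [← LinearMap.comp_assoc]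
  exact leftComm_comp_mk k A (splitTP k A n (tailSet S)) a

end CupChain

section FinsetLemmas

variable {n : ℕ}

lemma zero_not_mem_image_succ (T : Finset (Fin n)) :
    (0 : Fin (n + 1)) ∉ T.image Fin.succ := by
  simp [Finset.mem_image, (Fin.succ_ne_zero _)]

lemma tailSet_image_succ (T : Finset (Fin n)) : tailSet (T.image Fin.succ) = T := by
  ext i
  simp [tailSet, Finset.mem_image, Fin.succ_inj]

lemma tailSet_insert_zero (T : Finset (Fin n)) :
    tailSet (insert 0 (T.image Fin.succ)) = T := by
  ext i
  simp [tailSet, Finset.mem_image, Fin.succ_inj, (Fin.succ_ne_zero i).symm, Fin.succ_ne_zero]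

lemma image_succ_tailSet {S : Finset (Fin (n + 1))} (h : (0 : Fin (n + 1)) ∉ S) :
    (tailSet S).image Fin.succ = S := by
  ext j
  refine Fin.cases ?_ ?_ j
  · simp [h, Finset.mem_image, (Fin.succ_ne_zero _)]
  · intro i
    simp [tailSet, Finset.mem_image, Fin.succ_inj]

lemma insert_zero_image_succ_tailSet {S : Finset (Fin (n + 1))} (h : (0 : Fin (n + 1)) ∈ S) :
    insert 0 ((tailSet S).image Fin.succ) = S := by
  ext j
  refine Fin.cases ?_ ?_ j
  · simp [h]
  · intro i
    simp [tailSet, Finset.mem_image, Fin.succ_inj, Fin.succ_ne_zero]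

lemma card_image_succ (T : Finset (Fin n)) : (T.image Fin.succ).card = T.card :=
  Finset.card_image_of_injective _ (Fin.succ_injective n)

lemma count_lt_succ (S : Finset (Fin (n + 1))) (i : Fin n) :
    ((Sᶜ.filter (· < i.succ)).card : ℕ)
      = (((tailSet S)ᶜ.filter (· < i)).card : ℕ)
        + (if (0 : Fin (n + 1)) ∈ S then 0 else 1) := by
  classical
  have key : Sᶜ.filter (· < i.succ)
      = (if (0 : Fin (n + 1)) ∈ S then ∅ else {0})
        ∪ (((tailSet S)ᶜ.filter (· < i)).image Fin.succ) := by
    ext j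
    refine Fin.cases ?_ ?_ j
    · by_cases h0 : (0 : Fin (n + 1)) ∈ S <;>
        simp [h0, Fin.succ_pos, Finset.mem_image, (Fin.succ_ne_zero _)]
    · intro m
      by_cases h0 : (0 : Fin (n + 1)) ∈ S <;>
        simp [h0, Finset.mem_image, Fin.succ_inj, Fin.succ_lt_succ_iff, tailSet,
          Fin.succ_ne_zero, and_comm]
  rw [key, Finset.card_union_of_disjoint, card_image_succ]
  · by_cases h0 : (0 : Fin (n + 1)) ∈ S <;> simp [h0]; omega
  · by_cases h0 : (0 : Fin (n + 1)) ∈ S <;>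
      simp [h0, Finset.disjoint_left, Finset.mem_image, (Fin.succ_ne_zero _)]

lemma shuffleSign_mem {S : Finset (Fin (n + 1))} (h : (0 : Fin (n + 1)) ∈ S) :
    shuffleSign S = shuffleSign (tailSet S) := by
  classical
  unfold shuffleSign
  congr 1
  rw [Finset.sum_congr (insert_zero_image_succ_tailSet h).symm (fun _ _ => rfl),
    Finset.sum_insert (zero_not_mem_image_succ _),
    Finset.sum_image (fun a _ b _ hab => Fin.succ_injective n hab)]
  have h0 : (Sᶜ.filter (· < (0 : Fin (n + 1)))).card = 0 := by
    simp [Finset.filter_eq_empty_iff]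
  rw [h0, zero_add]
  refine Finset.sum_congr rfl fun i _ => ?_
  rw [count_lt_succ S i, if_pos h, add_zero]

lemma shuffleSign_not_mem {S : Finset (Fin (n + 1))} (h : (0 : Fin (n + 1)) ∉ S) :
    shuffleSign S = (-1 : ℤ) ^ S.card * shuffleSign (tailSet S) := by
  classical
  unfold shuffleSign
  rw [← pow_add]
  congr 1
  rw [Finset.sum_congr (image_succ_tailSet h).symm (fun _ _ => rfl),
    Finset.sum_image (fun a _ b _ hab => Fin.succ_injective n hab)]
  have : ∀ i ∈ tailSet S, (Sᶜ.filter (· < i.succ)).card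
      = ((tailSet S)ᶜ.filter (· < i)).card + 1 := by
    intro i _
    rw [count_lt_succ S i, if_neg h]
  rw [Finset.sum_congr rfl this, Finset.sum_add_distrib, Finset.sum_const, smul_eq_mul,
    mul_one, tailSet_card_not_mem S h]
  ring

end FinsetLemmas
section CupRec
variable (A : Type) [Ring A] [Algebra k A]

lemma congr_tl {M N P Q : Type} [AddCommGroup M] [Module k M] [AddCommGroup N] [Module k N]
    [AddCommGroup P] [Module k P] [AddCommGroup Q] [Module k Q]
    (f : M ≃ₗ[k] N) (g : P ≃ₗ[k] Q) :
    (TensorProduct.congr f g).toLinearMap = TensorProduct.map f.toLinearMap g.toLinearMap := rfl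

variable {k} in
lemma rT_eq {M N P : Type} [AddCommGroup M] [Module k M] [AddCommGroup N] [Module k N]
    [AddCommGroup P] [Module k P] (f : M →ₗ[k] N) :
    LinearMap.rTensor P f = TensorProduct.map f LinearMap.id := rfl

variable {k} in
lemma lT_eq {M N P : Type} [AddCommGroup M] [Module k M] [AddCommGroup N] [Module k N]
    [AddCommGroup P] [Module k P] (f : M →ₗ[k] N) :
    LinearMap.lTensor P f = TensorProduct.map LinearMap.id f := rfl

lemma summand_mem (n p Q : ℕ) (a : A) (S : Finset (Fin (n + 1))) (h0 : (0 : Fin (n + 1)) ∈ S)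
    (hc : S.card = p + 1) (hcompl : Sᶜ.card = Q)
    (htc : (tailSet S).card = p) (htcc : (tailSet S)ᶜ.card = Q) :
    shuffleSign S •
        ((TensorProduct.congr (castTP k A hc) (castTP k A hcompl)).toLinearMap
          ∘ₗ (splitTP k A (n + 1) S ∘ₗ mkT k A n a))
      = shuffleSign (tailSet S) •
          (TensorProduct.map (mkT k A p a) LinearMap.id
            ∘ₗ ((TensorProduct.congr (castTP k A htc) (castTP k A htcc)).toLinearMap
                ∘ₗ splitTP k A n (tailSet S))) := by
  rw [shuffleSign_mem h0]
  congr 1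
  rw [splitTP_comp_mk_mem k A n S h0 a]
  simp only [congr_tl, rT_eq, ← LinearMap.comp_assoc, ← TensorProduct.map_comp]
  congr 2
  · rw [castTP_trans, castTP_mk k A htc]
  · rw [castTP_trans]
    rfl

lemma summand_not_mem (n P Q' : ℕ) (a : A) (S : Finset (Fin (n + 1)))
    (h0 : (0 : Fin (n + 1)) ∉ S)
    (hc : S.card = P) (hcompl : Sᶜ.card = Q' + 1)
    (htc : (tailSet S).card = P) (htcc : (tailSet S)ᶜ.card = Q') :
    shuffleSign S •
        ((TensorProduct.congr (castTP k A hc) (castTP k A hcompl)).toLinearMap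
          ∘ₗ (splitTP k A (n + 1) S ∘ₗ mkT k A n a))
      = ((-1 : ℤ) ^ P * shuffleSign (tailSet S)) •
          (TensorProduct.map LinearMap.id (mkT k A Q' a)
            ∘ₗ ((TensorProduct.congr (castTP k A htc) (castTP k A htcc)).toLinearMap
                ∘ₗ splitTP k A n (tailSet S))) := by
  subst hc
  rw [shuffleSign_not_mem h0]
  congr 1
  rw [splitTP_comp_mk_not_mem k A n S h0 a]
  simp only [congr_tl, lT_eq, ← LinearMap.comp_assoc, ← TensorProduct.map_comp]
  congr 2 <;>
    first
      | rfl
      | (rw [castTP_trans]; rfl)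
      | exact castTP_mk k A htcc _ a
      | (rw [castTP_trans]; exact castTP_mk k A htcc _ a)

/-- The subsets of `Fin (n+1)` of cardinality `p+1` containing `0`, vs subsets of `Fin n`
of cardinality `p`. -/
def memEquiv (n p : ℕ) :
    {S : {S : Finset (Fin (n + 1)) // S.card = p + 1} // (0 : Fin (n + 1)) ∈ S.1} ≃
      {T : Finset (Fin n) // T.card = p} where
  toFun S := ⟨tailSet S.1.1, by
    have h1 := tailSet_card_mem S.1.1 S.2
    have h2 := S.1.2
    omega⟩
  invFun T := ⟨⟨insert 0 (T.1.image Fin.succ), by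
      rw [Finset.card_insert_of_notMem (zero_not_mem_image_succ _), card_image_succ, T.2]⟩,
    Finset.mem_insert_self _ _⟩
  left_inv S := by
    apply Subtype.ext
    apply Subtype.ext
    exact insert_zero_image_succ_tailSet S.2
  right_inv T := by
    apply Subtype.ext
    exact tailSet_insert_zero _

/-- The subsets of `Fin (n+1)` of cardinality `c` not containing `0`, vs subsets of `Fin n`
of cardinality `c`. -/
def notMemEquiv (n c : ℕ) :
    {S : {S : Finset (Fin (n + 1)) // S.card = c} // ¬ (0 : Fin (n + 1)) ∈ S.1} ≃
      {T : Finset (Fin n) // T.card = c} where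
  toFun S := ⟨tailSet S.1.1, by rw [tailSet_card_not_mem S.1.1 S.2, S.1.2]⟩
  invFun T := ⟨⟨T.1.image Fin.succ, by rw [card_image_succ, T.2]⟩,
    zero_not_mem_image_succ _⟩
  left_inv S := by
    apply Subtype.ext
    apply Subtype.ext
    exact image_succ_tailSet S.2
  right_inv T := by
    apply Subtype.ext
    exact tailSet_image_succ _

lemma cupTP_comp_mk_int (n p q : ℕ) (hpq : p + 1 + (q + 1) = n + 1) (h₁ : p + (q + 1) = n)
    (h₂ : p + 1 + q = n) (a : A) :
    cupTP k A (n + 1) (p + 1) (q + 1) hpq ∘ₗ mkT k A n a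
      = TensorProduct.map (mkT k A p a) LinearMap.id ∘ₗ cupTP k A n p (q + 1) h₁
        + ((-1 : ℤ) ^ (p + 1)) •
            (TensorProduct.map LinearMap.id (mkT k A q a) ∘ₗ cupTP k A n (p + 1) q h₂) := by
  classical
  unfold cupTP
  rw [sum_comp', comp_sum', comp_sum']
  simp only [zsmul_comp', comp_zsmul', LinearMap.comp_assoc, Finset.smul_sum, smul_smul]
  rw [← Finset.sum_filter_add_sum_filter_not Finset.univ
    (fun S : {S : Finset (Fin (n + 1)) // S.card = p + 1} => (0 : Fin (n + 1)) ∈ S.1)]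
  congr 1
  · rw [Finset.sum_subtype (Finset.filter _ Finset.univ)
      (fun S => by simp : ∀ S : {S : Finset (Fin (n + 1)) // S.card = p + 1},
        S ∈ Finset.filter (fun S => (0 : Fin (n + 1)) ∈ S.1) Finset.univ ↔ (0 : Fin (n+1)) ∈ S.1)]
    refine Fintype.sum_equiv (memEquiv n p) _ _ fun S => ?_
    have htc : (tailSet S.1.1).card = p := by
      have h1 := tailSet_card_mem S.1.1 S.2
      have h2 := S.1.2
      omega
    exact summand_mem k A n p (q + 1) a S.1.1 S.2 S.1.2
      (card_compl_eq hpq S.1.1 S.1.2) htc (card_compl_eq h₁ _ htc)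
  · rw [Finset.sum_subtype (Finset.filter _ Finset.univ)
      (fun S => by simp : ∀ S : {S : Finset (Fin (n + 1)) // S.card = p + 1},
        S ∈ Finset.filter (fun S => ¬ (0 : Fin (n + 1)) ∈ S.1) Finset.univ
          ↔ ¬ (0 : Fin (n+1)) ∈ S.1)]
    refine Fintype.sum_equiv (notMemEquiv n (p + 1)) _ _ fun S => ?_
    have htc : (tailSet S.1.1).card = p + 1 := by
      rw [tailSet_card_not_mem S.1.1 S.2, S.1.2]
    exact summand_not_mem k A n (p + 1) q a S.1.1 S.2 S.1.2
      (card_compl_eq hpq S.1.1 S.1.2) htc (card_compl_eq h₂ _ htc)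

end CupRec
section CupRec2
variable (A : Type) [Ring A] [Algebra k A]

def zeroEquiv (n : ℕ) :
    {S : Finset (Fin (n + 1)) // S.card = 0} ≃ {T : Finset (Fin n) // T.card = 0} where
  toFun S := ⟨tailSet S.1, by
    rw [tailSet_card_not_mem S.1 (by
      rw [Finset.card_eq_zero.mp S.2]; exact Finset.notMem_empty _), S.2]⟩
  invFun T := ⟨T.1.image Fin.succ, by rw [card_image_succ, T.2]⟩
  left_inv S := Subtype.ext (image_succ_tailSet (by
    rw [Finset.card_eq_zero.mp S.2]; exact Finset.notMem_empty _))
  right_inv T := Subtype.ext (tailSet_image_succ _)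

def fullEquiv (n : ℕ) :
    {S : Finset (Fin (n + 1)) // S.card = n + 1} ≃ {T : Finset (Fin n) // T.card = n} where
  toFun S := ⟨tailSet S.1, by
    have h0 : (0 : Fin (n + 1)) ∈ S.1 := by
      rw [Finset.eq_univ_of_card S.1 (by rw [S.2, Fintype.card_fin])]
      exact Finset.mem_univ _
    have := tailSet_card_mem S.1 h0
    omega⟩
  invFun T := ⟨insert 0 (T.1.image Fin.succ), by
    rw [Finset.card_insert_of_notMem (zero_not_mem_image_succ _), card_image_succ, T.2]⟩
  left_inv S := Subtype.ext (insert_zero_image_succ_tailSet (by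
    rw [Finset.eq_univ_of_card S.1 (by rw [S.2, Fintype.card_fin])]
    exact Finset.mem_univ _))
  right_inv T := Subtype.ext (tailSet_insert_zero _)

lemma cupTP_comp_mk_left0 (n : ℕ) (hpq : 0 + (n + 1) = n + 1) (h₁ : 0 + n = n) (a : A) :
    cupTP k A (n + 1) 0 (n + 1) hpq ∘ₗ mkT k A n a
      = TensorProduct.map LinearMap.id (mkT k A n a) ∘ₗ cupTP k A n 0 n h₁ := by
  classical
  unfold cupTP
  rw [sum_comp', comp_sum']
  simp only [zsmul_comp', comp_zsmul', LinearMap.comp_assoc]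
  refine Fintype.sum_equiv (zeroEquiv n) _ _ fun S => ?_
  have h0 : (0 : Fin (n + 1)) ∉ S.1 := by
    rw [Finset.card_eq_zero.mp S.2]; exact Finset.notMem_empty _
  have htc : (tailSet S.1).card = 0 := by rw [tailSet_card_not_mem S.1 h0, S.2]
  rw [summand_not_mem k A n 0 n a S.1 h0 S.2 (card_compl_eq hpq S.1 S.2) htc
    (card_compl_eq h₁ _ htc)]
  rw [pow_zero, one_mul]
  rfl

lemma cupTP_comp_mk_right0 (n : ℕ) (hpq : n + 1 + 0 = n + 1) (h₁ : n + 0 = n) (a : A) :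
    cupTP k A (n + 1) (n + 1) 0 hpq ∘ₗ mkT k A n a
      = TensorProduct.map (mkT k A n a) LinearMap.id ∘ₗ cupTP k A n n 0 h₁ := by
  classical
  unfold cupTP
  rw [sum_comp', comp_sum']
  simp only [zsmul_comp', comp_zsmul', LinearMap.comp_assoc]
  refine Fintype.sum_equiv (fullEquiv n) _ _ fun S => ?_
  have h0 : (0 : Fin (n + 1)) ∈ S.1 := by
    rw [Finset.eq_univ_of_card S.1 (by rw [S.2, Fintype.card_fin])]
    exact Finset.mem_univ _
  have htc : (tailSet S.1).card = n := by
    have := tailSet_card_mem S.1 h0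
    have h2 := S.2
    omega
  rw [summand_mem k A n n 0 a S.1 h0 S.2 (card_compl_eq hpq S.1 S.2) htc
    (card_compl_eq h₁ _ htc)]
  rfl

/-- Totalized unshuffle coproduct component: `0` when the degrees don't match. -/
def cupO (n p q : ℕ) : TP k A n →ₗ[k] TP k A p ⊗[k] TP k A q :=
  if h : p + q = n then cupTP k A n p q h else 0

lemma cupO_eq {n p q : ℕ} (h : p + q = n) : cupO k A n p q = cupTP k A n p q h := dif_pos h

lemma cupO_ne {n p q : ℕ} (h : ¬ p + q = n) : cupO k A n p q = 0 := dif_neg h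

lemma cupO_mk (n p q : ℕ) (a : A) :
    cupO k A (n + 1) (p + 1) (q + 1) ∘ₗ mkT k A n a
      = TensorProduct.map (mkT k A p a) LinearMap.id ∘ₗ cupO k A n p (q + 1)
        + ((-1 : ℤ) ^ (p + 1)) •
            (TensorProduct.map LinearMap.id (mkT k A q a) ∘ₗ cupO k A n (p + 1) q) := by
  by_cases h : p + 1 + (q + 1) = n + 1
  · rw [cupO_eq k A h, cupO_eq k A (show p + (q + 1) = n by omega),
      cupO_eq k A (show p + 1 + q = n by omega)]
    exact cupTP_comp_mk_int k A n p q h _ _ a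
  · rw [cupO_ne k A h, cupO_ne k A (show ¬ p + (q + 1) = n by omega),
      cupO_ne k A (show ¬ p + 1 + q = n by omega)]
    simp

lemma cupO_mk_left (n q : ℕ) (a : A) :
    cupO k A (n + 1) 0 (q + 1) ∘ₗ mkT k A n a
      = TensorProduct.map LinearMap.id (mkT k A q a) ∘ₗ cupO k A n 0 q := by
  by_cases h : q = n
  · subst h
    rw [cupO_eq k A (show 0 + (q + 1) = q + 1 by omega), cupO_eq k A (show 0 + q = q by omega)]
    exact cupTP_comp_mk_left0 k A q _ _ a
  · rw [cupO_ne k A (show ¬ 0 + (q + 1) = n + 1 by omega),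
      cupO_ne k A (show ¬ 0 + q = n by omega)]
    simp

lemma cupO_mk_right (n p : ℕ) (a : A) :
    cupO k A (n + 1) (p + 1) 0 ∘ₗ mkT k A n a
      = TensorProduct.map (mkT k A p a) LinearMap.id ∘ₗ cupO k A n p 0 := by
  by_cases h : p = n
  · subst h
    rw [cupO_eq k A (show p + 1 + 0 = p + 1 by omega), cupO_eq k A (show p + 0 = p by omega)]
    exact cupTP_comp_mk_right0 k A p _ _ a
  · rw [cupO_ne k A (show ¬ p + 1 + 0 = n + 1 by omega),
      cupO_ne k A (show ¬ p + 0 = n by omega)]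
    simp

lemma cupO_zero_zero (n : ℕ) : cupO k A (n + 1) 0 0 = 0 :=
  cupO_ne k A (by omega)

end CupRec2
section C2Sec
variable (A : Type) [Ring A] [Algebra k A]

/-- Prepend the two legs of a two-tensor, linearly in the two-tensor. -/
def c2L (n : ℕ) : (A ⊗[k] A) →ₗ[k] (TP k A n →ₗ[k] TP k A (n + 2)) where
  toFun t := (TensorProduct.assoc k A A (TP k A n)).toLinearMap
      ∘ₗ TensorProduct.mk k (A ⊗[k] A) (TP k A n) t
  map_add' t t' := by
    ext x
    exact (congrArg (TensorProduct.assoc k A A (TP k A n)) (TensorProduct.add_tmul t t' x)).trans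
      (map_add _ _ _)
  map_smul' c t := by
    ext x
    exact (congrArg (TensorProduct.assoc k A A (TP k A n))
      (TensorProduct.smul_tmul' c t x).symm).trans (map_smul _ _ _)

lemma c2L_tmul (n : ℕ) (a b : A) :
    c2L k A n (a ⊗ₜ[k] b) = mkT k A (n + 1) a ∘ₗ mkT k A n b := by
  ext x
  exact TensorProduct.assoc_tmul a b x

/-- `t = a ⊗ b ↦ (x ↦ (a ⊗ -) ⊗ (b ⊗ -)) ∘ ∪_{p,q}`, linearly in `t`. -/
def spL (n p q : ℕ) :
    (A ⊗[k] A) →ₗ[k] (TP k A n →ₗ[k] TP k A (p + 1) ⊗[k] TP k A (q + 1)) :=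
  LinearMap.lcomp k _ (cupO k A n p q)
    ∘ₗ TensorProduct.homTensorHomMap (RingHom.id k) (TP k A p) (TP k A q) (TP k A (p + 1)) (TP k A (q + 1))
    ∘ₗ TensorProduct.map (TensorProduct.mk k A (TP k A p)) (TensorProduct.mk k A (TP k A q))

lemma spL_tmul (n p q : ℕ) (a b : A) :
    spL k A n p q (a ⊗ₜ[k] b)
      = TensorProduct.map (mkT k A p a) (mkT k A q b) ∘ₗ cupO k A n p q := by
  ext x
  simp only [spL, mkT, LinearMap.comp_apply, TensorProduct.map_tmul,
    TensorProduct.homTensorHomMap_apply, LinearMap.lcomp_apply]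
  rfl

variable {k A} in
lemma ext_mk {n : ℕ} {C : Type} [AddCommGroup C] [Module k C] {F G : TP k A (n + 1) →ₗ[k] C}
    (h : ∀ a : A, F ∘ₗ mkT k A n a = G ∘ₗ mkT k A n a) : F = G := by
  apply TensorProduct.ext'
  intro a x
  exact congrFun (congrArg DFunLike.coe (h a)) x

lemma cupO_mk_lzero (n q : ℕ) (a : A) :
    cupO k A (n + 1) 1 (q + 1) ∘ₗ mkT k A n a
      = TensorProduct.map (mkT k A 0 a) LinearMap.id ∘ₗ cupO k A n 0 (q + 1)
        + (-1 : ℤ) • (TensorProduct.map LinearMap.id (mkT k A q a) ∘ₗ cupO k A n 1 q) := by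
  rw [show (-1 : ℤ) = (-1 : ℤ) ^ (0 + 1) by norm_num]
  exact cupO_mk k A n 0 q a

lemma cupO_mk_rzero (n p : ℕ) (a : A) :
    cupO k A (n + 1) (p + 1) 1 ∘ₗ mkT k A n a
      = TensorProduct.map (mkT k A p a) LinearMap.id ∘ₗ cupO k A n p 1
        + ((-1 : ℤ) ^ (p + 1)) •
            (TensorProduct.map LinearMap.id (mkT k A 0 a) ∘ₗ cupO k A n (p + 1) 0) :=
  cupO_mk k A n p 0 a

lemma cupO_mk_11 (n : ℕ) (a : A) :
    cupO k A (n + 1) 1 1 ∘ₗ mkT k A n a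
      = TensorProduct.map (mkT k A 0 a) LinearMap.id ∘ₗ cupO k A n 0 1
        + (-1 : ℤ) • (TensorProduct.map LinearMap.id (mkT k A 0 a) ∘ₗ cupO k A n 1 0) := by
  rw [show (-1 : ℤ) = (-1 : ℤ) ^ (0 + 1) by norm_num]
  exact cupO_mk k A n 0 0 a

lemma cupO_mk_left1 (n : ℕ) (a : A) :
    cupO k A (n + 1) 0 1 ∘ₗ mkT k A n a
      = TensorProduct.map LinearMap.id (mkT k A 0 a) ∘ₗ cupO k A n 0 0 :=
  cupO_mk_left k A n 0 a

lemma cupO_mk_right1 (n : ℕ) (a : A) :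
    cupO k A (n + 1) 1 0 ∘ₗ mkT k A n a
      = TensorProduct.map (mkT k A 0 a) LinearMap.id ∘ₗ cupO k A n 0 0 :=
  cupO_mk_right k A n 0 a

lemma cupO_c2_int (n p q : ℕ) (t : A ⊗[k] A) :
    cupO k A (n + 2) (p + 2) (q + 2) ∘ₗ c2L k A n t
      = TensorProduct.map (c2L k A p t) LinearMap.id ∘ₗ cupO k A n p (q + 2)
        + ((-1 : ℤ) ^ (p + 1)) • spL k A n (p + 1) (q + 1) t
        + ((-1 : ℤ) ^ (p + 2)) • spL k A n (p + 1) (q + 1) (TensorProduct.comm k A A t)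
        + TensorProduct.map LinearMap.id (c2L k A q t) ∘ₗ cupO k A n (p + 2) q := by
  induction t using TensorProduct.induction_on with
  | zero => simp
  | add y z hy hz =>
      simp only [map_add, LinearMap.comp_add, TensorProduct.map_add_left,
        TensorProduct.map_add_right, LinearMap.add_comp, smul_add] at hy hz ⊢
      rw [hy, hz]
      abel
  | tmul a b =>
      simp only [TensorProduct.comm_tmul, c2L_tmul, spL_tmul]
      rw [← LinearMap.comp_assoc, cupO_mk, LinearMap.add_comp, zsmul_comp',
        LinearMap.comp_assoc, LinearMap.comp_assoc, cupO_mk, cupO_mk]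
      simp only [LinearMap.comp_add, comp_zsmul', ← LinearMap.comp_assoc,
        ← TensorProduct.map_comp, smul_add, smul_smul, LinearMap.comp_id, LinearMap.id_comp,
        show p + 1 + 1 = p + 2 from rfl, show q + 1 + 1 = q + 2 from rfl]
      have h1 : ((-1 : ℤ) ^ (p + 2) * (-1) ^ (p + 2)) = 1 := by
        rw [← pow_add]
        exact Even.neg_one_pow ⟨p + 2, by ring⟩
      rw [h1, one_smul]
      abel

lemma cupO_c2_left (n q : ℕ) (t : A ⊗[k] A) :
    cupO k A (n + 2) 1 (q + 2) ∘ₗ c2L k A n t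
      = spL k A n 0 (q + 1) t
        + (-1 : ℤ) • spL k A n 0 (q + 1) (TensorProduct.comm k A A t)
        + TensorProduct.map LinearMap.id (c2L k A q t) ∘ₗ cupO k A n 1 q := by
  induction t using TensorProduct.induction_on with
  | zero => simp
  | add y z hy hz =>
      simp only [map_add, LinearMap.comp_add, TensorProduct.map_add_left,
        TensorProduct.map_add_right, LinearMap.add_comp, smul_add] at hy hz ⊢
      rw [hy, hz]
      abel
  | tmul a b =>
      simp only [TensorProduct.comm_tmul, c2L_tmul, spL_tmul]
      rw [← LinearMap.comp_assoc, cupO_mk_lzero,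
        LinearMap.add_comp, zsmul_comp', LinearMap.comp_assoc, LinearMap.comp_assoc,
        cupO_mk_left, cupO_mk_lzero]
      simp only [LinearMap.comp_add, comp_zsmul', ← LinearMap.comp_assoc,
        ← TensorProduct.map_comp, smul_add, smul_smul, LinearMap.comp_id, LinearMap.id_comp,
        show q + 1 + 1 = q + 2 from rfl]
      have h1 : ((-1 : ℤ) * -1) = 1 := by norm_num
      rw [h1, one_smul]
      abel

lemma cupO_c2_right (n p : ℕ) (t : A ⊗[k] A) :
    cupO k A (n + 2) (p + 2) 1 ∘ₗ c2L k A n t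
      = TensorProduct.map (c2L k A p t) LinearMap.id ∘ₗ cupO k A n p 1
        + ((-1 : ℤ) ^ (p + 1)) • spL k A n (p + 1) 0 t
        + ((-1 : ℤ) ^ (p + 2)) • spL k A n (p + 1) 0 (TensorProduct.comm k A A t) := by
  induction t using TensorProduct.induction_on with
  | zero => simp
  | add y z hy hz =>
      simp only [map_add, LinearMap.comp_add, TensorProduct.map_add_left,
        TensorProduct.map_add_right, LinearMap.add_comp, smul_add] at hy hz ⊢
      rw [hy, hz]
      abel
  | tmul a b =>
      simp only [TensorProduct.comm_tmul, c2L_tmul, spL_tmul]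
      rw [← LinearMap.comp_assoc, cupO_mk_rzero,
        LinearMap.add_comp, zsmul_comp', LinearMap.comp_assoc, LinearMap.comp_assoc,
        cupO_mk_rzero, cupO_mk_right]
      simp only [LinearMap.comp_add, comp_zsmul', ← LinearMap.comp_assoc,
        ← TensorProduct.map_comp, smul_add, smul_smul, LinearMap.comp_id, LinearMap.id_comp,
        show p + 1 + 1 = p + 2 from rfl]

lemma cupO_c2_11 (n : ℕ) (t : A ⊗[k] A) :
    cupO k A (n + 2) 1 1 ∘ₗ c2L k A n t
      = spL k A n 0 0 t + (-1 : ℤ) • spL k A n 0 0 (TensorProduct.comm k A A t) := by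
  induction t using TensorProduct.induction_on with
  | zero => simp
  | add y z hy hz =>
      simp only [map_add, LinearMap.comp_add, LinearMap.add_comp, smul_add] at hy hz ⊢
      rw [hy, hz]
      abel
  | tmul a b =>
      simp only [TensorProduct.comm_tmul, c2L_tmul, spL_tmul]
      rw [← LinearMap.comp_assoc, cupO_mk_11,
        LinearMap.add_comp, zsmul_comp', LinearMap.comp_assoc, LinearMap.comp_assoc,
        cupO_mk_left1, cupO_mk_right1]
      simp only [LinearMap.comp_add, comp_zsmul', ← LinearMap.comp_assoc,
        ← TensorProduct.map_comp, smul_add, smul_smul, LinearMap.comp_id, LinearMap.id_comp]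

lemma cupO_c2_left0 (n q : ℕ) (t : A ⊗[k] A) :
    cupO k A (n + 2) 0 (q + 2) ∘ₗ c2L k A n t
      = TensorProduct.map LinearMap.id (c2L k A q t) ∘ₗ cupO k A n 0 q := by
  induction t using TensorProduct.induction_on with
  | zero => simp
  | add y z hy hz =>
      simp only [map_add, LinearMap.comp_add, TensorProduct.map_add_right,
        LinearMap.add_comp] at hy hz ⊢
      rw [hy, hz]
  | tmul a b =>
      simp only [c2L_tmul]
      rw [← LinearMap.comp_assoc, cupO_mk_left, LinearMap.comp_assoc, cupO_mk_left]
      simp only [← LinearMap.comp_assoc, ← TensorProduct.map_comp, LinearMap.comp_id,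
        LinearMap.id_comp]

lemma cupO_c2_right0 (n p : ℕ) (t : A ⊗[k] A) :
    cupO k A (n + 2) (p + 2) 0 ∘ₗ c2L k A n t
      = TensorProduct.map (c2L k A p t) LinearMap.id ∘ₗ cupO k A n p 0 := by
  induction t using TensorProduct.induction_on with
  | zero => simp
  | add y z hy hz =>
      simp only [map_add, LinearMap.comp_add, TensorProduct.map_add_left,
        LinearMap.add_comp] at hy hz ⊢
      rw [hy, hz]
  | tmul a b =>
      simp only [c2L_tmul]
      rw [← LinearMap.comp_assoc, cupO_mk_right, LinearMap.comp_assoc, cupO_mk_right]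
      simp only [← LinearMap.comp_assoc, ← TensorProduct.map_comp, LinearMap.comp_id,
        LinearMap.id_comp]

end C2Sec
section MoreAux
variable (A : Type) [Ring A] [Algebra k A]

variable {k A} in
lemma comp_add' {M N P : Type} [AddCommGroup M] [Module k M] [AddCommGroup N] [Module k N]
    [AddCommGroup P] [Module k P] (f : N →ₗ[k] P) (g h : M →ₗ[k] N) :
    f ∘ₗ (g + h) = f ∘ₗ g + f ∘ₗ h := by
  ext x; simp

variable {k A} in
lemma comp_sub' {M N P : Type} [AddCommGroup M] [Module k M] [AddCommGroup N] [Module k N]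
    [AddCommGroup P] [Module k P] (f : N →ₗ[k] P) (g h : M →ₗ[k] N) :
    f ∘ₗ (g - h) = f ∘ₗ g - f ∘ₗ h := by
  ext x; simp

lemma comulAt_zero (cA : A →ₗ[k] A ⊗[k] A) (n : ℕ) :
    comulAt k A cA (n + 1) 0
      = (TensorProduct.assoc k A A (TP k A n)).toLinearMap ∘ₗ LinearMap.rTensor (TP k A n) cA := by
  cases n <;> rfl

lemma comulAt_zero_mk (cA : A →ₗ[k] A ⊗[k] A) (n : ℕ) (a : A) :
    comulAt k A cA (n + 1) 0 ∘ₗ mkT k A n a = c2L k A n (cA a) := by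
  rw [comulAt_zero]
  ext x
  rfl

lemma comulAt_succ (cA : A →ₗ[k] A ⊗[k] A) (n : ℕ) (i : Fin (n + 1)) :
    comulAt k A cA (n + 2) i.succ = LinearMap.lTensor A (comulAt k A cA (n + 1) i) :=
  rfl

lemma comulAt_succ_mk (cA : A →ₗ[k] A ⊗[k] A) (n : ℕ) (i : Fin n) (a : A) :
    comulAt k A cA (n + 1) i.succ ∘ₗ mkT k A n a
      = mkT k A (n + 1) a ∘ₗ comulAt k A cA n i := by
  cases n with
  | zero => exact i.elim0
  | succ m =>
      rw [comulAt_succ]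
      ext x
      rfl

lemma snoc1_mk (n : ℕ) (a : A) :
    snoc1 k A (n + 1) ∘ₗ mkT k A n a = mkT k A (n + 1) a ∘ₗ snoc1 k A n := by
  ext x
  rfl

end MoreAux
end HopfCyclicStmt



open HopfCyclicStmt

variable (k : Type) [Field k] [CharZero k]
variable (H : Type) [Ring H] [HopfAlgebra k H]

/-- The Hochschild differential `b = Σ_{i=0}^{n+1} (−1)^i dᵢ : H^{⊗n} → H^{⊗(n+1)}` of
the Connes–Moscovici complex with trivial coefficients: `d₀ = 1 ⊗ −`,
`dᵢ = Δ` applied to the `i`-th factor (`1 ≤ i ≤ n`), `d_{n+1} = − ⊗ 1`. -/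
def bCM (n : ℕ) : TP k H n →ₗ[k] TP k H (n + 1) :=
  cons1 k H n
    + ∑ i : Fin n, ((-1 : ℤ) ^ (i.val + 1)) • comulAt k H (Coalgebra.comul) n i
    + ((-1 : ℤ) ^ (n + 1)) • snoc1 k H n
lemma map_zero_right' {M N P Q : Type} [AddCommGroup M] [Module k M] [AddCommGroup N]
    [Module k N] [AddCommGroup P] [Module k P] [AddCommGroup Q] [Module k Q]
    (f : M →ₗ[k] P) : TensorProduct.map f (0 : N →ₗ[k] Q) = 0 := by
  apply TensorProduct.ext'
  intro x y
  simp

lemma map_zero_left' {M N P Q : Type} [AddCommGroup M] [Module k M] [AddCommGroup N]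
    [Module k N] [AddCommGroup P] [Module k P] [AddCommGroup Q] [Module k Q]
    (f : N →ₗ[k] Q) : TensorProduct.map (0 : M →ₗ[k] P) f = 0 := by
  apply TensorProduct.ext'
  intro x y
  simp

lemma map_sub_right' {M N P Q : Type} [AddCommGroup M] [Module k M] [AddCommGroup N]
    [Module k N] [AddCommGroup P] [Module k P] [AddCommGroup Q] [Module k Q]
    (f : M →ₗ[k] P) (g h : N →ₗ[k] Q) :
    TensorProduct.map f (g - h) = TensorProduct.map f g - TensorProduct.map f h := by
  apply TensorProduct.ext'
  intro x y
  simp [TensorProduct.tmul_sub]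

lemma map_sub_left' {M N P Q : Type} [AddCommGroup M] [Module k M] [AddCommGroup N]
    [Module k N] [AddCommGroup P] [Module k P] [AddCommGroup Q] [Module k Q]
    (f : N →ₗ[k] Q) (g h : M →ₗ[k] P) :
    TensorProduct.map (g - h) f = TensorProduct.map g f - TensorProduct.map h f := by
  apply TensorProduct.ext'
  intro x y
  simp [TensorProduct.sub_tmul]

lemma bCM_zero : bCM k H 0 = 0 := by
  unfold bCM
  have h : snoc1 k H 0 = cons1 k H 0 := by
    apply LinearMap.ext_ring
    rfl
  rw [h]
  simp

lemma bCM_mk (n : ℕ) (a : H) :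
    bCM k H (n + 1) ∘ₗ mkT k H n a
      = mkT k H (n + 1) 1 ∘ₗ mkT k H n a + mkT k H (n + 1) a ∘ₗ mkT k H n 1
        - c2L k H n (Coalgebra.comul a) - mkT k H (n + 1) a ∘ₗ bCM k H n := by
  have hs : ∀ m : ℕ, ((-1 : ℤ)) ^ (m + 1 + 1) = -((-1 : ℤ)) ^ (m + 1) := by
    intro m; rw [pow_succ]; ring
  unfold bCM
  rw [LinearMap.add_comp, LinearMap.add_comp, sum_comp']
  simp only [zsmul_comp']
  rw [Fin.sum_univ_succ]
  simp only [comulAt_succ_mk, Fin.val_succ, Fin.val_zero, zero_add, pow_one, snoc1_mk,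
    comulAt_zero_mk, cons1_eq_mkT, hs, neg_smul, comp_add', comp_sum', comp_zsmul',
    Finset.sum_neg_distrib]
  abel

set_option maxHeartbeats 1600000 in
lemma cup_bCM (hcocomm : ∀ h : H,
      TensorProduct.comm k H H (Coalgebra.comul h) = Coalgebra.comul h) :
    ∀ n : ℕ,
      (∀ p q : ℕ, cupO k H (n + 1) (p + 1) (q + 1) ∘ₗ bCM k H n
          = TensorProduct.map (bCM k H p) LinearMap.id ∘ₗ cupO k H n p (q + 1)
            + ((-1 : ℤ) ^ (p + 1)) •
                (TensorProduct.map LinearMap.id (bCM k H q) ∘ₗ cupO k H n (p + 1) q))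
      ∧ (∀ q : ℕ, cupO k H (n + 1) 0 (q + 1) ∘ₗ bCM k H n
          = TensorProduct.map LinearMap.id (bCM k H q) ∘ₗ cupO k H n 0 q)
      ∧ (∀ p : ℕ, cupO k H (n + 1) (p + 1) 0 ∘ₗ bCM k H n
          = TensorProduct.map (bCM k H p) LinearMap.id ∘ₗ cupO k H n p 0) := by
  intro n
  induction n with
  | zero =>
      refine ⟨fun p q => ?_, fun q => ?_, fun p => ?_⟩
      · rw [bCM_zero, cupO_ne k H (show ¬ p + (q + 1) = 0 by omega),
          cupO_ne k H (show ¬ p + 1 + q = 0 by omega)]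
        simp
      · cases q with
        | zero => rw [bCM_zero]; simp [map_zero_right' k]
        | succ s =>
            rw [bCM_zero, cupO_ne k H (show ¬ (0 : ℕ) + (s + 1) = 0 by omega)]
            simp
      · cases p with
        | zero => rw [bCM_zero]; simp [map_zero_left' k]
        | succ s =>
            rw [bCM_zero, cupO_ne k H (show ¬ (s + 1) + (0 : ℕ) = 0 by omega)]
            simp
  | succ m ih =>
      obtain ⟨ihInt, ihL, ihR⟩ := ih
      refine ⟨fun p q => ?_, fun q => ?_, fun p => ?_⟩
      · -- interior components
        cases p with
        | zero =>
            cases q with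
            | zero =>
                refine ext_mk fun a => ?_
                rw [LinearMap.comp_assoc, bCM_mk, comp_sub', comp_sub', comp_add',
                  ← c2L_tmul k H m 1 a, ← c2L_tmul k H m a 1]
                simp only [cupO_c2_11 k H m]
                rw [hcocomm a]
                have h4 : cupO k H (m + 2) 1 1 ∘ₗ (mkT k H (m + 1) a ∘ₗ bCM k H m) = 0 := by
                  rw [← LinearMap.comp_assoc, cupO_mk_11, LinearMap.add_comp, zsmul_comp',
                    LinearMap.comp_assoc, LinearMap.comp_assoc, ihL 0, ihR 0, bCM_zero,
                    map_zero_left' k, map_zero_right' k]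
                  simp
                rw [h4, bCM_zero, map_zero_left' k, map_zero_right' k]
                simp only [TensorProduct.comm_tmul, spL_tmul, LinearMap.zero_comp,
                  LinearMap.comp_zero, smul_zero, add_zero, zero_add, sub_zero,
                  neg_one_smul]
                abel
            | succ v =>
                refine ext_mk fun a => ?_
                rw [LinearMap.comp_assoc, bCM_mk, comp_sub', comp_sub', comp_add',
                  ← c2L_tmul k H m 1 a, ← c2L_tmul k H m a 1]
                simp only [cupO_c2_left k H m v]
                rw [hcocomm a]
                have h4 : cupO k H (m + 2) 1 (v + 2) ∘ₗ (mkT k H (m + 1) a ∘ₗ bCM k H m)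
                    = TensorProduct.map (mkT k H 0 a) (bCM k H (v + 1))
                        ∘ₗ cupO k H m 0 (v + 1)
                      + TensorProduct.map LinearMap.id (mkT k H (v + 1) a ∘ₗ bCM k H v)
                          ∘ₗ cupO k H m 1 v := by
                  rw [← LinearMap.comp_assoc, cupO_mk_lzero, LinearMap.add_comp, zsmul_comp',
                    LinearMap.comp_assoc, LinearMap.comp_assoc, ihL (v + 1), ihInt 0 v,
                    bCM_zero, map_zero_left' k]
                  simp only [comp_add', comp_zsmul', smul_add, smul_smul,
                    ← LinearMap.comp_assoc, ← TensorProduct.map_comp, LinearMap.comp_id,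
                    LinearMap.id_comp, LinearMap.zero_comp, LinearMap.comp_zero, zero_add,
                    add_zero, smul_zero]
                  rw [show ((-1 : ℤ) * (-1) ^ (0 + 1)) = 1 by norm_num, one_smul]
                have hR : (TensorProduct.map (bCM k H 0) LinearMap.id
                        ∘ₗ cupO k H (m + 1) 0 (v + 2)
                      + ((-1 : ℤ) ^ (0 + 1)) •
                          (TensorProduct.map LinearMap.id (bCM k H (v + 1))
                            ∘ₗ cupO k H (m + 1) 1 (v + 1))) ∘ₗ mkT k H m a
                    = ((-1 : ℤ) ^ (0 + 1)) •
                          (TensorProduct.map (mkT k H 0 a) (bCM k H (v + 1))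
                            ∘ₗ cupO k H m 0 (v + 1))
                      + TensorProduct.map LinearMap.id (bCM k H (v + 1) ∘ₗ mkT k H v a)
                          ∘ₗ cupO k H m 1 v := by
                  rw [LinearMap.add_comp, zsmul_comp', bCM_zero, map_zero_left' k]
                  simp only [LinearMap.zero_comp, zero_add]
                  rw [LinearMap.comp_assoc, cupO_mk_lzero]
                  simp only [comp_add', comp_zsmul', smul_add, smul_smul,
                    ← LinearMap.comp_assoc, ← TensorProduct.map_comp, LinearMap.comp_id,
                    LinearMap.id_comp]
                  rw [show ((-1 : ℤ) ^ (0 + 1) * (-1)) = 1 by norm_num, one_smul]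
                rw [h4, hR, bCM_mk, map_sub_right' k, map_sub_right' k,
                  TensorProduct.map_add_right, LinearMap.sub_comp, LinearMap.sub_comp,
                  LinearMap.add_comp]
                simp only [TensorProduct.comm_tmul, spL_tmul, c2L_tmul, neg_one_smul,
                  show ((-1 : ℤ) ^ (0 + 1)) = -1 by norm_num, neg_smul]
                abel
        | succ u =>
            cases q with
            | zero =>
                refine ext_mk fun a => ?_
                rw [LinearMap.comp_assoc, bCM_mk, comp_sub', comp_sub', comp_add',
                  ← c2L_tmul k H m 1 a, ← c2L_tmul k H m a 1]
                simp only [cupO_c2_right k H m u]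
                rw [hcocomm a]
                have h4 : cupO k H (m + 2) (u + 2) 1 ∘ₗ (mkT k H (m + 1) a ∘ₗ bCM k H m)
                    = TensorProduct.map (mkT k H (u + 1) a ∘ₗ bCM k H u) LinearMap.id
                        ∘ₗ cupO k H m u 1
                      + ((-1 : ℤ) ^ (u + 2)) •
                          (TensorProduct.map (bCM k H (u + 1)) (mkT k H 0 a)
                            ∘ₗ cupO k H m (u + 1) 0) := by
                  rw [← LinearMap.comp_assoc, cupO_mk_rzero, LinearMap.add_comp, zsmul_comp',
                    LinearMap.comp_assoc, LinearMap.comp_assoc, ihInt u 0, ihR (u + 1),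
                    bCM_zero, map_zero_right' k]
                  simp only [comp_add', comp_zsmul', smul_add, smul_smul,
                    ← LinearMap.comp_assoc, ← TensorProduct.map_comp, LinearMap.comp_id,
                    LinearMap.id_comp, LinearMap.zero_comp, LinearMap.comp_zero, zero_add,
                    add_zero, smul_zero, show u + 1 + 1 = u + 2 from rfl]
                have hR : (TensorProduct.map (bCM k H (u + 1)) LinearMap.id
                        ∘ₗ cupO k H (m + 1) (u + 1) 1
                      + ((-1 : ℤ) ^ (u + 1 + 1)) •
                          (TensorProduct.map LinearMap.id (bCM k H 0)
                            ∘ₗ cupO k H (m + 1) (u + 2) 0)) ∘ₗ mkT k H m a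
                    = TensorProduct.map (bCM k H (u + 1) ∘ₗ mkT k H u a) LinearMap.id
                        ∘ₗ cupO k H m u 1
                      + ((-1 : ℤ) ^ (u + 1)) •
                          (TensorProduct.map (bCM k H (u + 1)) (mkT k H 0 a)
                            ∘ₗ cupO k H m (u + 1) 0) := by
                  rw [LinearMap.add_comp, zsmul_comp', bCM_zero, map_zero_right' k]
                  simp only [LinearMap.zero_comp, smul_zero, add_zero]
                  rw [LinearMap.comp_assoc, cupO_mk_rzero]
                  simp only [comp_add', comp_zsmul', smul_add, smul_smul,
                    ← LinearMap.comp_assoc, ← TensorProduct.map_comp, LinearMap.comp_id,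
                    LinearMap.id_comp]
                rw [h4, hR, bCM_mk, map_sub_left' k, map_sub_left' k,
                  TensorProduct.map_add_left, LinearMap.sub_comp, LinearMap.sub_comp,
                  LinearMap.add_comp]
                simp only [TensorProduct.comm_tmul, spL_tmul, c2L_tmul,
                  show ∀ j : ℕ, ((-1 : ℤ)) ^ (j + 1 + 1) = -((-1 : ℤ)) ^ (j + 1) from
                    fun j => by rw [pow_succ]; ring,
                  neg_smul]
                abel
            | succ v =>
                refine ext_mk fun a => ?_
                rw [LinearMap.comp_assoc, bCM_mk, comp_sub', comp_sub', comp_add',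
                  ← c2L_tmul k H m 1 a, ← c2L_tmul k H m a 1]
                simp only [cupO_c2_int k H m u v]
                rw [hcocomm a]
                have h4 : cupO k H (m + 2) (u + 2) (v + 2)
                      ∘ₗ (mkT k H (m + 1) a ∘ₗ bCM k H m)
                    = TensorProduct.map (mkT k H (u + 1) a ∘ₗ bCM k H u) LinearMap.id
                        ∘ₗ cupO k H m u (v + 2)
                      + ((-1 : ℤ) ^ (u + 1)) •
                          (TensorProduct.map (mkT k H (u + 1) a) (bCM k H (v + 1))
                            ∘ₗ cupO k H m (u + 1) (v + 1))
                      + ((-1 : ℤ) ^ (u + 2)) •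
                          (TensorProduct.map (bCM k H (u + 1)) (mkT k H (v + 1) a)
                            ∘ₗ cupO k H m (u + 1) (v + 1))
                      + TensorProduct.map LinearMap.id (mkT k H (v + 1) a ∘ₗ bCM k H v)
                          ∘ₗ cupO k H m (u + 2) v := by
                  rw [← LinearMap.comp_assoc, cupO_mk, LinearMap.add_comp, zsmul_comp',
                    LinearMap.comp_assoc, LinearMap.comp_assoc, ihInt u (v + 1),
                    ihInt (u + 1) v]
                  simp only [comp_add', comp_zsmul', smul_add, smul_smul,
                    ← LinearMap.comp_assoc, ← TensorProduct.map_comp, LinearMap.comp_id,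
                    LinearMap.id_comp, show u + 1 + 1 = u + 2 from rfl,
                    show v + 1 + 1 = v + 2 from rfl]
                  rw [show ((-1 : ℤ) ^ (u + 2) * (-1) ^ (u + 2)) = 1 by
                      rw [← pow_add]; exact Even.neg_one_pow ⟨u + 2, by ring⟩,
                    one_smul]
                  abel
                have hR : (TensorProduct.map (bCM k H (u + 1)) LinearMap.id
                        ∘ₗ cupO k H (m + 1) (u + 1) (v + 2)
                      + ((-1 : ℤ) ^ (u + 1 + 1)) •
                          (TensorProduct.map LinearMap.id (bCM k H (v + 1))
                            ∘ₗ cupO k H (m + 1) (u + 2) (v + 1))) ∘ₗ mkT k H m a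
                    = TensorProduct.map (bCM k H (u + 1) ∘ₗ mkT k H u a) LinearMap.id
                        ∘ₗ cupO k H m u (v + 2)
                      + ((-1 : ℤ) ^ (u + 1)) •
                          (TensorProduct.map (bCM k H (u + 1)) (mkT k H (v + 1) a)
                            ∘ₗ cupO k H m (u + 1) (v + 1))
                      + ((-1 : ℤ) ^ (u + 2)) •
                          (TensorProduct.map (mkT k H (u + 1) a) (bCM k H (v + 1))
                            ∘ₗ cupO k H m (u + 1) (v + 1))
                      + TensorProduct.map LinearMap.id (bCM k H (v + 1) ∘ₗ mkT k H v a)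
                          ∘ₗ cupO k H m (u + 2) v := by
                  rw [LinearMap.add_comp, zsmul_comp', LinearMap.comp_assoc, cupO_mk,
                    LinearMap.comp_assoc, cupO_mk]
                  simp only [comp_add', comp_zsmul', smul_add, smul_smul,
                    ← LinearMap.comp_assoc, ← TensorProduct.map_comp, LinearMap.comp_id,
                    LinearMap.id_comp, show u + 1 + 1 = u + 2 from rfl,
                    show v + 1 + 1 = v + 2 from rfl]
                  rw [show ((-1 : ℤ) ^ (u + 2) * (-1) ^ (u + 2)) = 1 by
                      rw [← pow_add]; exact Even.neg_one_pow ⟨u + 2, by ring⟩,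
                    one_smul]
                  abel
                rw [h4, hR, bCM_mk, bCM_mk, map_sub_left' k, map_sub_left' k,
                  TensorProduct.map_add_left, map_sub_right' k, map_sub_right' k,
                  TensorProduct.map_add_right, LinearMap.sub_comp, LinearMap.sub_comp,
                  LinearMap.add_comp, LinearMap.sub_comp, LinearMap.sub_comp,
                  LinearMap.add_comp]
                simp only [TensorProduct.comm_tmul, spL_tmul, c2L_tmul,
                  show ∀ j : ℕ, ((-1 : ℤ)) ^ (j + 1 + 1) = -((-1 : ℤ)) ^ (j + 1) from
                    fun j => by rw [pow_succ]; ring,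
                  neg_smul]
                abel
      · -- left boundary `p = 0`
        cases q with
        | zero =>
            rw [cupO_ne k H (show ¬ (0 : ℕ) + 1 = m + 2 by omega), cupO_zero_zero k H m]
            simp
        | succ s =>
            refine ext_mk fun a => ?_
            rw [LinearMap.comp_assoc, bCM_mk, comp_sub', comp_sub', comp_add']
            have hP1 : cupO k H (m + 2) 0 (s + 2) ∘ₗ (mkT k H (m + 1) 1 ∘ₗ mkT k H m a)
                = TensorProduct.map LinearMap.id (mkT k H (s + 1) 1 ∘ₗ mkT k H s a)
                    ∘ₗ cupO k H m 0 s := by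
              rw [← LinearMap.comp_assoc, cupO_mk_left, LinearMap.comp_assoc, cupO_mk_left,
                ← LinearMap.comp_assoc, ← TensorProduct.map_comp, LinearMap.id_comp]
            have hP2 : cupO k H (m + 2) 0 (s + 2) ∘ₗ (mkT k H (m + 1) a ∘ₗ mkT k H m 1)
                = TensorProduct.map LinearMap.id (mkT k H (s + 1) a ∘ₗ mkT k H s 1)
                    ∘ₗ cupO k H m 0 s := by
              rw [← LinearMap.comp_assoc, cupO_mk_left, LinearMap.comp_assoc, cupO_mk_left,
                ← LinearMap.comp_assoc, ← TensorProduct.map_comp, LinearMap.id_comp]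
            have hP4 : cupO k H (m + 2) 0 (s + 2) ∘ₗ (mkT k H (m + 1) a ∘ₗ bCM k H m)
                = TensorProduct.map LinearMap.id (mkT k H (s + 1) a ∘ₗ bCM k H s)
                    ∘ₗ cupO k H m 0 s := by
              rw [← LinearMap.comp_assoc, cupO_mk_left, LinearMap.comp_assoc, ihL s,
                ← LinearMap.comp_assoc, ← TensorProduct.map_comp, LinearMap.id_comp]
            have hR : (TensorProduct.map LinearMap.id (bCM k H (s + 1))
                  ∘ₗ cupO k H (m + 1) 0 (s + 1)) ∘ₗ mkT k H m a
                = TensorProduct.map LinearMap.id (bCM k H (s + 1) ∘ₗ mkT k H s a)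
                    ∘ₗ cupO k H m 0 s := by
              rw [LinearMap.comp_assoc, cupO_mk_left, ← LinearMap.comp_assoc,
                ← TensorProduct.map_comp, LinearMap.id_comp]
            rw [hP1, hP2, cupO_c2_left0 k H m s, hP4, hR, bCM_mk, map_sub_right' k,
              map_sub_right' k, TensorProduct.map_add_right, LinearMap.sub_comp,
              LinearMap.sub_comp, LinearMap.add_comp]
      · -- right boundary `q = 0`
        cases p with
        | zero =>
            rw [cupO_ne k H (show ¬ (1 : ℕ) + 0 = m + 2 by omega), cupO_zero_zero k H m]
            simp
        | succ s =>
            refine ext_mk fun a => ?_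
            rw [LinearMap.comp_assoc, bCM_mk, comp_sub', comp_sub', comp_add']
            have hP1 : cupO k H (m + 2) (s + 2) 0 ∘ₗ (mkT k H (m + 1) 1 ∘ₗ mkT k H m a)
                = TensorProduct.map (mkT k H (s + 1) 1 ∘ₗ mkT k H s a) LinearMap.id
                    ∘ₗ cupO k H m s 0 := by
              rw [← LinearMap.comp_assoc, cupO_mk_right, LinearMap.comp_assoc, cupO_mk_right,
                ← LinearMap.comp_assoc, ← TensorProduct.map_comp, LinearMap.id_comp]
            have hP2 : cupO k H (m + 2) (s + 2) 0 ∘ₗ (mkT k H (m + 1) a ∘ₗ mkT k H m 1)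
                = TensorProduct.map (mkT k H (s + 1) a ∘ₗ mkT k H s 1) LinearMap.id
                    ∘ₗ cupO k H m s 0 := by
              rw [← LinearMap.comp_assoc, cupO_mk_right, LinearMap.comp_assoc, cupO_mk_right,
                ← LinearMap.comp_assoc, ← TensorProduct.map_comp, LinearMap.id_comp]
            have hP4 : cupO k H (m + 2) (s + 2) 0 ∘ₗ (mkT k H (m + 1) a ∘ₗ bCM k H m)
                = TensorProduct.map (mkT k H (s + 1) a ∘ₗ bCM k H s) LinearMap.id
                    ∘ₗ cupO k H m s 0 := by
              rw [← LinearMap.comp_assoc, cupO_mk_right, LinearMap.comp_assoc, ihR s,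
                ← LinearMap.comp_assoc, ← TensorProduct.map_comp, LinearMap.id_comp]
            have hR : (TensorProduct.map (bCM k H (s + 1)) LinearMap.id
                  ∘ₗ cupO k H (m + 1) (s + 1) 0) ∘ₗ mkT k H m a
                = TensorProduct.map (bCM k H (s + 1) ∘ₗ mkT k H s a) LinearMap.id
                    ∘ₗ cupO k H m s 0 := by
              rw [LinearMap.comp_assoc, cupO_mk_right, ← LinearMap.comp_assoc,
                ← TensorProduct.map_comp, LinearMap.id_comp]
            rw [hP1, hP2, cupO_c2_right0 k H m s, hP4, hR, bCM_mk, map_sub_left' k,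
              map_sub_left' k, TensorProduct.map_add_left, LinearMap.sub_comp,
              LinearMap.sub_comp, LinearMap.add_comp]

/-- For a cocommutative Hopf algebra `H`, the unshuffle coproduct is a
morphism of cochain complexes from `(H^{⊗•}, b)` to the total tensor product complex,
and consequently it maps cocycles to cocycles, inducing the coproduct `⊔` on the
Hochschild cohomology of the Connes–Moscovici complex. -/
theorem cup_chain_map
    (hcocomm : ∀ h : H, TensorProduct.comm k H H (Coalgebra.comul h) = Coalgebra.comul h) :
    -- interior components: `∪_{p+1,q+1} ∘ b = (b⊗id) ∘ ∪_{p,q+1} + (−1)^{p+1} (id⊗b) ∘ ∪_{p+1,q}`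
    (∀ (n p q : ℕ) (h : p + 1 + (q + 1) = n + 1) (h₁ : p + (q + 1) = n)
        (h₂ : p + 1 + q = n),
      cupTP k H (n + 1) (p + 1) (q + 1) h ∘ₗ bCM k H n
        = TensorProduct.map (bCM k H p) LinearMap.id ∘ₗ cupTP k H n p (q + 1) h₁
          + ((-1 : ℤ) ^ (p + 1)) •
              (TensorProduct.map LinearMap.id (bCM k H q) ∘ₗ cupTP k H n (p + 1) q h₂))
    -- boundary component `p = 0`
    ∧ (∀ (n : ℕ),
      cupTP k H (n + 1) 0 (n + 1) (by omega) ∘ₗ bCM k H n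
        = TensorProduct.map LinearMap.id (bCM k H n) ∘ₗ cupTP k H n 0 n (by omega))
    -- boundary component `q = 0`
    ∧ (∀ (n : ℕ),
      cupTP k H (n + 1) (n + 1) 0 (by omega) ∘ₗ bCM k H n
        = TensorProduct.map (bCM k H n) LinearMap.id ∘ₗ cupTP k H n n 0 (by omega))
    -- consequently, cocycles are sent to cocycles of the total tensor product complex,
    -- so `∪` induces the coproduct `⊔ : HHⁿ(H) → ⊕_{p+q=n} HH^p(H) ⊗ HH^q(H)`
    ∧ (∀ (n p q : ℕ) (h₁ : p + (q + 1) = n) (h₂ : p + 1 + q = n) (x : TP k H n),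
      bCM k H n x = 0 →
      TensorProduct.map (bCM k H p) LinearMap.id (cupTP k H n p (q + 1) h₁ x)
          + ((-1 : ℤ) ^ (p + 1)) •
              TensorProduct.map LinearMap.id (bCM k H q) (cupTP k H n (p + 1) q h₂ x) = 0)
    := by
  have hmain := cup_bCM k H hcocomm
  refine ⟨?_, ?_, ?_, ?_⟩
  · intro n p q h h₁ h₂
    have hthis := (hmain n).1 p q
    rw [cupO_eq k H h, cupO_eq k H h₁, cupO_eq k H h₂] at hthis
    exact hthis
  · intro n
    have hthis := (hmain n).2.1 n
    rw [cupO_eq k H (show 0 + (n + 1) = n + 1 by omega),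
      cupO_eq k H (show 0 + n = n by omega)] at hthis
    exact hthis
  · intro n
    have hthis := (hmain n).2.2 n
    rw [cupO_eq k H (show n + 1 + 0 = n + 1 by omega),
      cupO_eq k H (show n + 0 = n by omega)] at hthis
    exact hthis
  · intro n p q h₁ h₂ x hx
    have h : p + 1 + (q + 1) = n + 1 := by omega
    have hthis := (hmain n).1 p q
    rw [cupO_eq k H h, cupO_eq k H h₁, cupO_eq k H h₂] at hthis
    have e := DFunLike.congr_fun hthis x
    simp only [LinearMap.comp_apply, LinearMap.add_apply, LinearMap.smul_apply, hx,
      map_zero] at e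
    exact e.symm

end
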